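/- arXiv:1904.03432 — 6 statements merged into one kernel-verified Lean document; each statement's English description precedes it below -/
import Mathlib

section
/- For every τ in the upper half-plane with Im τ ≥ 2, one has |χ(τ) − q^{−1}| ≤ 4808 and |ξ(τ) − q^{−1}| ≤ 4782, where q = e^{2πiτ}. -/
open Complex

noncomputable section

/-- `sigma' k n = ∑_{d ∣ n} d^k`, the sum of the k-th powers of the positive divisors of n. -/
def sigma' (k n : ℕ) : ℕ := ∑ d ∈ n.divisors, d ^ k

/-- `qpar τ = e^{2πiτ}`. -/
def qpar (τ : ℂ) : ℂ := Complex.exp (2 * Real.pi * Complex.I * τ)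

/-- The quasimodular Eisenstein series `E₂(τ) = 1 - 24 ∑_{n≥1} σ₁(n) qⁿ`. -/
def E2 (τ : ℂ) : ℂ := 1 - 24 * ∑' n : ℕ, (sigma' 1 (n + 1) : ℂ) * qpar τ ^ (n + 1)

/-- The Eisenstein series `E₄(τ) = 1 + 240 ∑_{n≥1} σ₃(n) qⁿ`. -/
def E4 (τ : ℂ) : ℂ := 1 + 240 * ∑' n : ℕ, (sigma' 3 (n + 1) : ℂ) * qpar τ ^ (n + 1)

/-- The Eisenstein series `E₆(τ) = 1 - 504 ∑_{n≥1} σ₅(n) qⁿ`. -/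
def E6 (τ : ℂ) : ℂ := 1 - 504 * ∑' n : ℕ, (sigma' 5 (n + 1) : ℂ) * qpar τ ^ (n + 1)

/-- The modular discriminant `Δ = (E₄³ - E₆²)/1728`. -/
def Δ' (τ : ℂ) : ℂ := (E4 τ ^ 3 - E6 τ ^ 2) / 1728

/-- The modular j-invariant `j = E₄³/Δ`. -/
def jinv (τ : ℂ) : ℂ := E4 τ ^ 3 / Δ' τ

/-- `χ = E₂E₄E₆/Δ`. -/
def χ' (τ : ℂ) : ℂ := E2 τ * E4 τ * E6 τ / Δ' τ

/-- `ξ = E₄E₆/Δ`. -/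
def ξ' (τ : ℂ) : ℂ := E4 τ * E6 τ / Δ' τ

/-- The almost holomorphic modular function `χ*(τ) = χ(τ) - (3/(π Im τ)) ξ(τ)`. -/
def χstar (τ : ℂ) : ℂ := χ' τ - (3 / (Real.pi * τ.im) : ℝ) * ξ' τ

/-- `τ` lies in the upper half-plane and satisfies `aτ² + bτ + c = 0` where
`a > 0` and `gcd(a,b,c) = 1`. -/
def QuadPoint (τ : ℂ) (a b c : ℤ) : Prop :=
  0 < τ.im ∧ 0 < a ∧ Int.gcd (Int.gcd a b) c = 1 ∧
    (a : ℂ) * τ ^ 2 + (b : ℂ) * τ + (c : ℂ) = 0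

/-- `τ` is a quadratic point of the upper half-plane. -/
def IsQuadratic (τ : ℂ) : Prop := ∃ a b c : ℤ, QuadPoint τ a b c

/-- `τ` is a quadratic point of discriminant `D = b² - 4ac`. -/
def HasDisc (τ : ℂ) (D : ℤ) : Prop :=
  ∃ a b c : ℤ, QuadPoint τ a b c ∧ D = b ^ 2 - 4 * a * c

/-- Membership in the closed standard fundamental domain
`F = {z ∈ ℍ : |z| ≥ 1, -1/2 ≤ Re z ≤ 1/2}`. -/
def inF (τ : ℂ) : Prop :=
  0 < τ.im ∧ 1 ≤ ‖τ‖ ∧ -(1 / 2) ≤ τ.re ∧ τ.re ≤ 1 / 2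

/-- `τ` and `τ'` lie in the same `SL₂(ℤ)`-orbit under Möbius transformations. -/
def MoebiusEquiv (τ τ' : ℂ) : Prop :=
  ∃ γ : Matrix.SpecialLinearGroup (Fin 2) ℤ,
    τ' = ((γ.1 0 0 : ℂ) * τ + (γ.1 0 1 : ℂ)) / ((γ.1 1 0 : ℂ) * τ + (γ.1 1 1 : ℂ))

lemma sigma'_le_64pow (k n : ℕ) (hk : k ≤ 5) : sigma' k n ≤ 64 ^ n := by
  rcases Nat.eq_zero_or_pos n with h | h
  · subst h; simp [sigma']
  have hsub : n.divisors ⊆ Finset.Icc 1 n := by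
    intro d hd
    exact Finset.mem_Icc.mpr ⟨Nat.pos_of_mem_divisors hd, Nat.divisor_le hd⟩
  calc sigma' k n ≤ ∑ _d ∈ n.divisors, n ^ k :=
        Finset.sum_le_sum (fun d hd => Nat.pow_le_pow_left (Nat.divisor_le hd) k)
    _ = n.divisors.card * n ^ k := by rw [Finset.sum_const, smul_eq_mul]
    _ ≤ n * n ^ k := by
        apply Nat.mul_le_mul_right
        calc n.divisors.card ≤ (Finset.Icc 1 n).card := Finset.card_le_card hsub
          _ = n := by rw [Nat.card_Icc]; omega
    _ = n ^ (k + 1) := by rw [pow_succ, Nat.mul_comm]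
    _ ≤ n ^ 6 := Nat.pow_le_pow_right h (by omega)
    _ ≤ (2 ^ n) ^ 6 := Nat.pow_le_pow_left (Nat.lt_two_pow_self (n := n)).le 6
    _ = 64 ^ n := by rw [← pow_mul, Nat.mul_comm, pow_mul]; norm_num

lemma abs_sub_le'' (x y : ℂ) : ‖x - y‖ ≤ ‖x‖ + ‖y‖ := by
  calc ‖x - y‖ ≤ ‖x‖ + ‖-y‖ := by
        simpa [sub_eq_add_neg] using norm_add_le x (-y)
    _ = ‖x‖ + ‖y‖ := by rw [norm_neg]

lemma abs_add3 (x y z : ℂ) :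
    ‖x + y + z‖ ≤ ‖x‖ + ‖y‖ + ‖z‖ := by
  calc ‖x + y + z‖ ≤ ‖x + y‖ + ‖z‖ := norm_add_le _ _
    _ ≤ _ := by linarith [norm_add_le x y]

lemma abs_add7 (x1 x2 x3 x4 x5 x6 x7 : ℂ) :
    ‖x1 + x2 + x3 + x4 + x5 + x6 + x7‖ ≤
      ‖x1‖ + ‖x2‖ + ‖x3‖ + ‖x4‖ +
        ‖x5‖ + ‖x6‖ + ‖x7‖ := by
  calc ‖x1 + x2 + x3 + x4 + x5 + x6 + x7‖
      ≤ ‖x1 + x2 + x3 + x4 + x5 + x6‖ + ‖x7‖ := norm_add_le _ _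
    _ ≤ ‖x1 + x2 + x3 + x4 + x5‖ + ‖x6‖ + ‖x7‖ := by
        linarith [norm_add_le (x1 + x2 + x3 + x4 + x5) x6]
    _ ≤ ‖x1 + x2 + x3 + x4‖ + ‖x5‖ + ‖x6‖ + ‖x7‖ := by
        linarith [norm_add_le (x1 + x2 + x3 + x4) x5]
    _ ≤ ‖x1 + x2 + x3‖ + ‖x4‖ + ‖x5‖ + ‖x6‖
          + ‖x7‖ := by
        linarith [norm_add_le (x1 + x2 + x3) x4]
    _ ≤ _ := by linarith [abs_add3 x1 x2 x3]

lemma abs_add5_sub (x1 x2 x3 x4 x5 x6 : ℂ) :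
    ‖x1 + x2 + x3 + x4 + x5 - x6‖ ≤
      ‖x1‖ + ‖x2‖ + ‖x3‖ + ‖x4‖ +
        ‖x5‖ + ‖x6‖ := by
  calc ‖x1 + x2 + x3 + x4 + x5 - x6‖
      ≤ ‖x1 + x2 + x3 + x4 + x5‖ + ‖x6‖ := abs_sub_le'' _ _
    _ ≤ ‖x1 + x2 + x3 + x4‖ + ‖x5‖ + ‖x6‖ := by
        linarith [norm_add_le (x1 + x2 + x3 + x4) x5]
    _ ≤ ‖x1 + x2 + x3‖ + ‖x4‖ + ‖x5‖ + ‖x6‖ := by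
        linarith [norm_add_le (x1 + x2 + x3) x4]
    _ ≤ _ := by linarith [abs_add3 x1 x2 x3]

lemma tsum_split (k : ℕ) (hk : k ≤ 5) (q : ℂ) (hq : ‖q‖ ≤ 62 / 10 ^ 7) :
    ‖(∑' n : ℕ, (sigma' k (n + 1) : ℂ) * q ^ (n + 1)) - q - (sigma' k 2 : ℂ) * q ^ 2‖
      ≤ 524288 * ‖q‖ ^ 3 := by
  have hr0 : 0 ≤ ‖q‖ := norm_nonneg q
  set r := ‖q‖ with hrdef
  have hx0 : (0:ℝ) ≤ 64 * r := by positivity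
  have hx1 : 64 * r < 1 := by nlinarith
  set f : ℕ → ℂ := fun n => (sigma' k (n + 1) : ℂ) * q ^ (n + 1) with hf
  have hnorm : ∀ n, ‖f n‖ ≤ (64 * r) ^ (n + 1) := by
    intro n
    have h1 : (sigma' k (n + 1) : ℝ) ≤ 64 ^ (n + 1) := by
      exact_mod_cast sigma'_le_64pow k (n + 1) hk
    have h2 : ‖f n‖ = (sigma' k (n + 1) : ℝ) * r ^ (n + 1) := by
      rw [hf]
      simp [norm_mul, norm_pow, Complex.norm_natCast, hrdef]
    rw [h2, mul_pow]
    exact mul_le_mul_of_nonneg_right h1 (by positivity)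
  have hgeo : Summable (fun n : ℕ => (64 * r) ^ (n + 1)) := by
    simpa [pow_succ] using (summable_geometric_of_lt_one hx0 hx1).mul_right (64 * r)
  have hsf : Summable f := Summable.of_norm_bounded hgeo hnorm
  have hsf1 : Summable fun n => f (n + 1) := (summable_nat_add_iff 1).mpr hsf
  have h0 : ∑' n, f n = f 0 + ∑' n, f (n + 1) := Summable.tsum_eq_zero_add hsf
  have h1 : ∑' n, f (n + 1) = f 1 + ∑' n, f (n + 2) := by
    have := Summable.tsum_eq_zero_add hsf1
    simpa using this
  have hf0 : f 0 = q := by simp [hf, sigma']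
  have hf1 : f 1 = (sigma' k 2 : ℂ) * q ^ 2 := by simp [hf]
  have hkey : (∑' n, f n) - q - (sigma' k 2 : ℂ) * q ^ 2 = ∑' n, f (n + 2) := by
    rw [h0, h1, hf0, hf1]; ring
  rw [hkey]
  have hg3 : Summable (fun n : ℕ => (64 * r) ^ (n + 3)) := by
    simpa [pow_add] using (summable_geometric_of_lt_one hx0 hx1).mul_right ((64 * r) ^ 3)
  have hb : ∀ n : ℕ, ‖f (n + 2)‖ ≤ (64 * r) ^ (n + 3) := fun n => hnorm (n + 2)
  have hle : ‖∑' n, f (n + 2)‖ ≤ ∑' n : ℕ, (64 * r) ^ (n + 3) :=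
    tsum_of_norm_bounded hg3.hasSum hb
  have htsum : ∑' n : ℕ, (64 * r) ^ (n + 3) = (1 - 64 * r)⁻¹ * (64 * r) ^ 3 := by
    simp_rw [pow_add]
    rw [tsum_mul_right, tsum_geometric_of_lt_one hx0 hx1]
  have hinv : (1 - 64 * r)⁻¹ ≤ 2 := by
    have hpos : (0:ℝ) < 1 - 64 * r := by nlinarith
    rw [inv_eq_one_div, div_le_iff₀ hpos]; nlinarith
  calc ‖∑' n, f (n + 2)‖ ≤ (1 - 64 * r)⁻¹ * (64 * r) ^ 3 := by rw [← htsum]; exact hle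
    _ ≤ 2 * (64 * r) ^ 3 := mul_le_mul_of_nonneg_right hinv (by positivity)
    _ = 524288 * r ^ 3 := by ring

/-- For `Im τ ≥ 2`, `|χ(τ) - q⁻¹| ≤ 4808` and `|ξ(τ) - q⁻¹| ≤ 4782`. -/
theorem strong_chi_xi_tail_bounds (τ : ℂ) (hτ : 2 ≤ τ.im) :
    ‖χ' τ - (qpar τ)⁻¹‖ ≤ 4808 ∧
    ‖ξ' τ - (qpar τ)⁻¹‖ ≤ 4782 := by
  set q := qpar τ with hq
  have hq_ne : q ≠ 0 := Complex.exp_ne_zero _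
  have hr0 : 0 < ‖q‖ := norm_pos_iff.mpr hq_ne
  -- the size bound on |q|
  have hr_le : ‖q‖ ≤ 62 / 10 ^ 7 := by
    have hre : (2 * (Real.pi : ℂ) * Complex.I * τ).re = -(2 * Real.pi * τ.im) := by
      simp [Complex.mul_re, Complex.mul_im]
    have h1 : ‖q‖ = Real.exp (-(2 * Real.pi * τ.im)) := by
      rw [hq, qpar, Complex.norm_exp, hre]
    have hpi : 3 < Real.pi := Real.pi_gt_three
    have h3 : Real.exp (-(2 * Real.pi * τ.im)) ≤ Real.exp (-12) :=
      Real.exp_le_exp.mpr (by nlinarith)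
    have h5 : (161291 : ℝ) ≤ Real.exp 12 := by
      have h6 : Real.exp (12 : ℝ) = Real.exp 1 ^ (12 : ℕ) := by
        rw [← Real.exp_nat_mul]; norm_num
      have h7 := Real.exp_one_gt_d9
      calc (161291 : ℝ) ≤ 2.7182818283 ^ (12 : ℕ) := by norm_num
        _ ≤ Real.exp 1 ^ (12 : ℕ) := pow_le_pow_left₀ (by norm_num) h7.le 12
        _ = Real.exp 12 := h6.symm
    have h4 : Real.exp (-12 : ℝ) ≤ 62 / 10 ^ 7 := by
      rw [Real.exp_neg]
      calc (Real.exp 12)⁻¹ ≤ (161291 : ℝ)⁻¹ := inv_anti₀ (by norm_num) h5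
        _ ≤ 62 / 10 ^ 7 := by norm_num
    rw [h1]; exact h3.trans h4
  have hq2 : ‖q‖ ^ 2 ≤ (62 / 10 ^ 7) * ‖q‖ := by nlinarith
  have hq3 : ‖q‖ ^ 3 ≤ (62 / 10 ^ 7) ^ 2 * ‖q‖ := by nlinarith
  have hq32 : ‖q‖ ^ 3 ≤ (62 / 10 ^ 7) * ‖q‖ ^ 2 := by nlinarith
  have hq2nn : 0 ≤ ‖q‖ ^ 2 := by positivity
  have hq3nn : 0 ≤ ‖q‖ ^ 3 := by positivity
  -- tail bounds
  have hσ1 : ((sigma' 1 2 : ℕ) : ℂ) = 3 := by norm_num [show sigma' 1 2 = 3 from by decide]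
  have hσ3 : ((sigma' 3 2 : ℕ) : ℂ) = 9 := by norm_num [show sigma' 3 2 = 9 from by decide]
  have hσ5 : ((sigma' 5 2 : ℕ) : ℂ) = 33 := by norm_num [show sigma' 5 2 = 33 from by decide]
  have ht1 := tsum_split 1 (by norm_num) q hr_le
  have ht3 := tsum_split 3 (by norm_num) q hr_le
  have ht5 := tsum_split 5 (by norm_num) q hr_le
  rw [hσ1] at ht1; rw [hσ3] at ht3; rw [hσ5] at ht5
  set T1 := (∑' n : ℕ, (sigma' 1 (n + 1) : ℂ) * q ^ (n + 1)) - q - 3 * q ^ 2 with hT1def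
  set T3 := (∑' n : ℕ, (sigma' 3 (n + 1) : ℂ) * q ^ (n + 1)) - q - 9 * q ^ 2 with hT3def
  set T5 := (∑' n : ℕ, (sigma' 5 (n + 1) : ℂ) * q ^ (n + 1)) - q - 33 * q ^ 2 with hT5def
  -- expressions for the Eisenstein series
  have hE2 : E2 τ = 1 - 24 * (q + 3 * q ^ 2 + T1) := by
    simp only [E2, ← hq, hT1def]; ring
  have hE4 : E4 τ = 1 + 240 * (q + 9 * q ^ 2 + T3) := by
    simp only [E4, ← hq, hT3def]; ring
  have hE6 : E6 τ = 1 - 504 * (q + 33 * q ^ 2 + T5) := by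
    simp only [E6, ← hq, hT5def]; ring
  set A := 240 * (q + 9 * q ^ 2 + T3) with hAdef
  set B := 504 * (q + 33 * q ^ 2 + T5) with hBdef
  set C := 24 * (q + 3 * q ^ 2 + T1) with hCdef
  -- component bounds
  have hA : ‖A‖ ≤ 241 * ‖q‖ := by
    rw [hAdef, norm_mul]
    have e240 : ‖(240 : ℂ)‖ = 240 := by norm_num
    rw [e240]
    have h1 : ‖q + 9 * q ^ 2 + T3‖ ≤
        ‖q‖ + 9 * ‖q‖ ^ 2 + ‖T3‖ := by
      refine (abs_add3 q (9 * q ^ 2) T3).trans ?_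
      simp [norm_mul, norm_pow]
    linarith [ht3, hq2, hq3]
  have hB : ‖B‖ ≤ 505 * ‖q‖ := by
    rw [hBdef, norm_mul]
    have e504 : ‖(504 : ℂ)‖ = 504 := by norm_num
    rw [e504]
    have h1 : ‖q + 33 * q ^ 2 + T5‖ ≤
        ‖q‖ + 33 * ‖q‖ ^ 2 + ‖T5‖ := by
      refine (abs_add3 q (33 * q ^ 2) T5).trans ?_
      simp [norm_mul, norm_pow]
    linarith [ht5, hq2, hq3]
  have hC : ‖C‖ ≤ 25 * ‖q‖ := by
    rw [hCdef, norm_mul]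
    have e24 : ‖(24 : ℂ)‖ = 24 := by norm_num
    rw [e24]
    have h1 : ‖q + 3 * q ^ 2 + T1‖ ≤
        ‖q‖ + 3 * ‖q‖ ^ 2 + ‖T1‖ := by
      refine (abs_add3 q (3 * q ^ 2) T1).trans ?_
      simp [norm_mul, norm_pow]
    linarith [ht1, hq2, hq3]
  have hA0 : 0 ≤ ‖A‖ := norm_nonneg A
  have hB0 : 0 ≤ ‖B‖ := norm_nonneg B
  have hC0 : 0 ≤ ‖C‖ := norm_nonneg C
  -- the discriminant decomposition
  have hD : E4 τ ^ 3 - E6 τ ^ 2 =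
      1728 * q + (39744 * q ^ 2 + 720 * T3 + 1008 * T5 + 3 * A ^ 2 + A ^ 3 - B ^ 2) := by
    rw [hE4, hE6, hAdef, hBdef]; ring
  set R := 39744 * q ^ 2 + 720 * T3 + 1008 * T5 + 3 * A ^ 2 + A ^ 3 - B ^ 2 with hRdef
  have hA2 : ‖A‖ ^ 2 ≤ 58081 * ‖q‖ ^ 2 := by
    calc ‖A‖ ^ 2 ≤ (241 * ‖q‖) ^ 2 := pow_le_pow_left₀ hA0 hA 2
      _ = 58081 * ‖q‖ ^ 2 := by ring
  have hA3 : ‖A‖ ^ 3 ≤ 13997521 * ‖q‖ ^ 3 := by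
    calc ‖A‖ ^ 3 ≤ (241 * ‖q‖) ^ 3 := pow_le_pow_left₀ hA0 hA 3
      _ = 13997521 * ‖q‖ ^ 3 := by ring
  have hB2 : ‖B‖ ^ 2 ≤ 255025 * ‖q‖ ^ 2 := by
    calc ‖B‖ ^ 2 ≤ (505 * ‖q‖) ^ 2 := pow_le_pow_left₀ hB0 hB 2
      _ = 255025 * ‖q‖ ^ 2 := by ring
  have hR : ‖R‖ ≤ 480000 * ‖q‖ ^ 2 := by
    rw [hRdef]
    refine (abs_add5_sub (39744 * q ^ 2) (720 * T3) (1008 * T5) (3 * A ^ 2) (A ^ 3)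
      (B ^ 2)).trans ?_
    have e1 : ‖39744 * q ^ 2‖ = 39744 * ‖q‖ ^ 2 := by
      rw [norm_mul, norm_pow]; norm_num
    have e2 : ‖720 * T3‖ = 720 * ‖T3‖ := by
      rw [norm_mul]; norm_num
    have e3 : ‖1008 * T5‖ = 1008 * ‖T5‖ := by
      rw [norm_mul]; norm_num
    have e4 : ‖3 * A ^ 2‖ = 3 * ‖A‖ ^ 2 := by
      rw [norm_mul, norm_pow]; norm_num
    have e5 : ‖A ^ 3‖ = ‖A‖ ^ 3 := by rw [norm_pow]
    have e6 : ‖B ^ 2‖ = ‖B‖ ^ 2 := by rw [norm_pow]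
    rw [e1, e2, e3, e4, e5, e6]
    linarith [ht3, ht5, hA2, hA3, hB2, hq32]
  -- lower bound for the denominator
  have hden : 1724 * ‖q‖ ≤ ‖1728 * q + R‖ := by
    have h2 : ‖1728 * q‖ ≤ ‖1728 * q + R‖ + ‖R‖ := by
      calc ‖1728 * q‖ = ‖(1728 * q + R) - R‖ := by congr 1; ring
        _ ≤ _ := abs_sub_le'' _ _
    have e : ‖1728 * q‖ = 1728 * ‖q‖ := by rw [norm_mul]; norm_num
    rw [e] at h2
    nlinarith [hR, hq2]
  have hden_ne : (1728 * q + R) ≠ 0 := by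
    intro h0
    rw [h0] at hden
    rw [norm_zero] at hden
    linarith
  have hΔ : Δ' τ = (1728 * q + R) / 1728 := by rw [Δ', hD]
  have hΔne : Δ' τ ≠ 0 := by
    rw [hΔ]; exact div_ne_zero hden_ne (by norm_num)
  -- product bounds
  have hAB : ‖A‖ * ‖B‖ ≤ 121705 * ‖q‖ ^ 2 := by
    calc ‖A‖ * ‖B‖ ≤ (241 * ‖q‖) * (505 * ‖q‖) :=
          mul_le_mul hA hB hB0 (by positivity)
      _ = 121705 * ‖q‖ ^ 2 := by ring
  have hCA : ‖C‖ * ‖A‖ ≤ 6025 * ‖q‖ ^ 2 := by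
    calc ‖C‖ * ‖A‖ ≤ (25 * ‖q‖) * (241 * ‖q‖) :=
          mul_le_mul hC hA hA0 (by positivity)
      _ = 6025 * ‖q‖ ^ 2 := by ring
  have hCB : ‖C‖ * ‖B‖ ≤ 12625 * ‖q‖ ^ 2 := by
    calc ‖C‖ * ‖B‖ ≤ (25 * ‖q‖) * (505 * ‖q‖) :=
          mul_le_mul hC hB hB0 (by positivity)
      _ = 12625 * ‖q‖ ^ 2 := by ring
  have hCAB : ‖C‖ * ‖A‖ * ‖B‖ ≤
      3042625 * ‖q‖ ^ 3 := by
    calc ‖C‖ * ‖A‖ * ‖B‖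
        ≤ (6025 * ‖q‖ ^ 2) * (505 * ‖q‖) :=
          mul_le_mul hCA hB hB0 (by positivity)
      _ = 3042625 * ‖q‖ ^ 3 := by ring
  -- numerator bounds
  have hN : ‖E2 τ * E4 τ * E6 τ - 1‖ ≤ 772 * ‖q‖ := by
    rw [hE2, hE4, hE6]
    have hexp : (1 - C) * (1 + A) * (1 - B) - 1 =
        A + -B + -C + -(A * B) + -(C * A) + C * B + C * A * B := by
      rw [hAdef, hBdef, hCdef]; ring
    rw [hexp]
    refine (abs_add7 A (-B) (-C) (-(A * B)) (-(C * A)) (C * B) (C * A * B)).trans ?_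
    simp only [norm_neg, norm_mul]
    linarith [hA, hB, hC, hAB, hCA, hCB, hCAB, hq2, hq3]
  have hM : ‖E4 τ * E6 τ - 1‖ ≤ 747 * ‖q‖ := by
    rw [hE4, hE6]
    have hexp : (1 + A) * (1 - B) - 1 = A + -B + -(A * B) := by
      rw [hAdef, hBdef]; ring
    rw [hexp]
    refine (abs_add3 A (-B) (-(A * B))).trans ?_
    simp only [norm_neg, norm_mul]
    linarith [hA, hB, hAB, hq2]
  -- reassembly
  have hdpos : 0 < ‖1728 * q + R‖ * ‖q‖ :=
    mul_pos (norm_pos_iff.mpr hden_ne) hr0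
  constructor
  · have hchi : χ' τ - q⁻¹ =
        (1728 * (E2 τ * E4 τ * E6 τ - 1) * q - R) / ((1728 * q + R) * q) := by
      rw [χ', hΔ]
      field_simp
      ring
    rw [hchi, norm_div, norm_mul]
    rw [div_le_iff₀ hdpos]
    have hnum : ‖1728 * (E2 τ * E4 τ * E6 τ - 1) * q - R‖ ≤
        1814016 * ‖q‖ ^ 2 := by
      refine (abs_sub_le'' _ _).trans ?_
      have e : ‖1728 * (E2 τ * E4 τ * E6 τ - 1) * q‖ =
          1728 * ‖E2 τ * E4 τ * E6 τ - 1‖ * ‖q‖ := by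
        rw [norm_mul, norm_mul]; norm_num
      rw [e]
      linarith [mul_le_mul_of_nonneg_right hN hr0.le, hR]
    linarith [hnum, mul_le_mul_of_nonneg_right hden hr0.le]
  · have hxi : ξ' τ - q⁻¹ =
        (1728 * (E4 τ * E6 τ - 1) * q - R) / ((1728 * q + R) * q) := by
      rw [ξ', hΔ]
      field_simp
      ring
    rw [hxi, norm_div, norm_mul]
    rw [div_le_iff₀ hdpos]
    have hnum : ‖1728 * (E4 τ * E6 τ - 1) * q - R‖ ≤
        1770816 * ‖q‖ ^ 2 := by
      refine (abs_sub_le'' _ _).trans ?_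
      have e : ‖1728 * (E4 τ * E6 τ - 1) * q‖ =
          1728 * ‖E4 τ * E6 τ - 1‖ * ‖q‖ := by
        rw [norm_mul, norm_mul]; norm_num
      rw [e]
      linarith [mul_le_mul_of_nonneg_right hM hr0.le, hR]
    linarith [hnum, mul_le_mul_of_nonneg_right hden hr0.le]
end
end

section
/- For every τ in the closed standard fundamental domain F = {z ∈ ℍ : |z| ≥ 1, −1/2 ≤ Re z ≤ 1/2}, one has |χ(τ) − q^{−1}| < 39960 and |ξ(τ) − q^{−1}| < 39032, where q = e^{2πiτ}. -/
open Complex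

noncomputable section

lemma sigma'_le (k m : ℕ) : (sigma' k m : ℝ) ≤ (m : ℝ) ^ (k + 1) := by
  have h : sigma' k m ≤ m ^ (k + 1) := by
    unfold sigma'
    calc ∑ d ∈ m.divisors, d ^ k ≤ ∑ _d ∈ m.divisors, m ^ k :=
          Finset.sum_le_sum (fun d hd => Nat.pow_le_pow_left (Nat.divisor_le hd) k)
      _ = m.divisors.card * m ^ k := by rw [Finset.sum_const, smul_eq_mul]
      _ ≤ m * m ^ k := by
          gcongr
          calc m.divisors.card ≤ (Finset.Icc 1 m).card := by
                apply Finset.card_le_card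
                intro d hd
                exact Finset.mem_Icc.2 ⟨(Nat.pos_of_mem_divisors hd), Nat.divisor_le hd⟩
            _ = m := by rw [Nat.card_Icc]; omega
      _ = m ^ (k + 1) := by ring
  calc (sigma' k m : ℝ) ≤ ((m ^ (k+1) : ℕ) : ℝ) := by exact_mod_cast h
    _ = (m : ℝ) ^ (k + 1) := by push_cast; ring

lemma add_one_le_two_pow (n : ℕ) : (n : ℝ) + 1 ≤ 2 ^ n := by
  induction n with
  | zero => norm_num
  | succ n ih =>
    push_cast
    calc (n : ℝ) + 1 + 1 ≤ 2 ^ n + 2 ^ n := by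
          have : (1:ℝ) ≤ 2 ^ n := one_le_pow₀ (by norm_num)
          linarith
      _ = 2 ^ (n + 1) := by ring

lemma add_three_le (n : ℕ) : (n : ℝ) + 3 ≤ 3 * (4 / 3) ^ n := by
  induction n with
  | zero => norm_num
  | succ n ih =>
    push_cast
    have h : (n : ℝ) + 3 + 1 ≤ (4/3) * ((n:ℝ) + 3) := by linarith [Nat.cast_nonneg (α := ℝ) n]
    calc (n : ℝ) + 1 + 3 ≤ (4/3) * ((n:ℝ) + 3) := by linarith
      _ ≤ (4/3) * (3 * (4/3)^n) := by nlinarith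
      _ = 3 * (4/3) ^ (n+1) := by ring

lemma summable_of_le_geom {f : ℕ → ℂ} {a g : ℝ} (hg0 : 0 ≤ g) (hg : g < 1)
    (h : ∀ n, ‖f n‖ ≤ a * g ^ n) : Summable f := by
  apply Summable.of_norm
  exact Summable.of_nonneg_of_le (fun n => norm_nonneg _) h
    ((summable_geometric_of_lt_one hg0 hg).mul_left a)

lemma abs_tsum_le {f : ℕ → ℂ} {a g : ℝ} (hg0 : 0 ≤ g) (hg : g < 1)
    (h : ∀ n, ‖f n‖ ≤ a * g ^ n) :
    ‖∑' n, f n‖ ≤ a / (1 - g) := by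
  have hgeo := (summable_geometric_of_lt_one hg0 hg).mul_left a
  have hs : Summable f := summable_of_le_geom hg0 hg h
  have hnorm : Summable (fun n => ‖f n‖) :=
    Summable.of_nonneg_of_le (fun n => norm_nonneg _) h hgeo
  calc ‖∑' n, f n‖ ≤ ∑' n, ‖f n‖ := norm_tsum_le_tsum_norm hnorm
    _ ≤ ∑' n, a * g ^ n := Summable.tsum_le_tsum h hnorm hgeo
    _ = a * (1 - g)⁻¹ := by rw [tsum_mul_left, tsum_geometric_of_lt_one hg0 hg]
    _ = a / (1 - g) := (div_eq_mul_inv a _).symm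

lemma sigma_tail_le (k n : ℕ) : (sigma' k (n + 3) : ℝ) ≤ 3 ^ (k+1) * ((4/3) ^ (k+1)) ^ n := by
  calc (sigma' k (n + 3) : ℝ) ≤ ((n + 3 : ℕ) : ℝ) ^ (k+1) := sigma'_le k (n+3)
    _ = ((n : ℝ) + 3) ^ (k+1) := by push_cast; ring
    _ ≤ (3 * (4/3) ^ n) ^ (k+1) := by
        apply pow_le_pow_left₀ (by positivity) (add_three_le n)
    _ = 3 ^ (k+1) * ((4/3) ^ (k+1)) ^ n := by
        rw [mul_pow, ← pow_mul, ← pow_mul, Nat.mul_comm]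

lemma sigma_all_le (k n : ℕ) : (sigma' k (n + 1) : ℝ) ≤ ((2:ℝ) ^ (k+1)) ^ n := by
  calc (sigma' k (n + 1) : ℝ) ≤ ((n + 1 : ℕ) : ℝ) ^ (k+1) := sigma'_le k (n+1)
    _ = ((n : ℝ) + 1) ^ (k+1) := by push_cast; ring
    _ ≤ ((2:ℝ) ^ n) ^ (k+1) := by
        apply pow_le_pow_left₀ (by positivity) (add_one_le_two_pow n)
    _ = ((2:ℝ) ^ (k+1)) ^ n := by rw [← pow_mul, ← pow_mul, Nat.mul_comm]

lemma summable_sigma (k : ℕ) {q : ℂ} (h2 : (2:ℝ) ^ (k+1) * ‖q‖ < 1) :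
    Summable (fun n : ℕ => (sigma' k (n+1) : ℂ) * q ^ (n+1)) := by
  apply summable_of_le_geom (a := ‖q‖) (g := (2:ℝ)^(k+1) * ‖q‖)
    (by positivity) h2
  intro n
  rw [norm_mul, norm_pow]
  have h1 : ‖((sigma' k (n+1) : ℕ) : ℂ)‖ = (sigma' k (n+1) : ℝ) := by
    rw [Complex.norm_natCast]
  rw [h1, mul_pow]
  calc (sigma' k (n+1) : ℝ) * ‖q‖ ^ (n+1)
      ≤ ((2:ℝ)^(k+1))^n * ‖q‖ ^ (n+1) := by
        apply mul_le_mul_of_nonneg_right (sigma_all_le k n) (by positivity)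
    _ = ‖q‖ * (((2:ℝ)^(k+1))^n * ‖q‖^n) := by ring
    _ = _ := by ring

lemma tail_bound (k : ℕ) {q : ℂ} (hgq : ((4:ℝ)/3) ^ (k+1) * ‖q‖ ≤ 1/38) :
    ‖∑' n : ℕ, (sigma' k (n+3) : ℂ) * q ^ (n+3)‖ ≤ 3 ^ (k+1) * (38/37) * ‖q‖ ^ 3 := by
  have hg0 : (0:ℝ) ≤ (4/3)^(k+1) * ‖q‖ := by positivity
  have hg1 : (4/3:ℝ)^(k+1) * ‖q‖ < 1 := lt_of_le_of_lt hgq (by norm_num)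
  have h := abs_tsum_le (f := fun n : ℕ => (sigma' k (n+3) : ℂ) * q ^ (n+3))
    (a := 3^(k+1) * ‖q‖^3) hg0 hg1 ?_
  · calc ‖∑' n : ℕ, (sigma' k (n+3) : ℂ) * q ^ (n+3)‖
        ≤ 3^(k+1) * ‖q‖^3 / (1 - (4/3:ℝ)^(k+1) * ‖q‖) := h
      _ ≤ 3^(k+1) * ‖q‖^3 / (37/38) := by
          apply div_le_div_of_nonneg_left (by positivity) (by norm_num) (by linarith)
      _ = 3^(k+1) * (38/37) * ‖q‖^3 := by ring
  · intro n
    rw [norm_mul, norm_pow, Complex.norm_natCast, mul_pow]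
    calc (sigma' k (n+3) : ℝ) * ‖q‖ ^ (n+3)
        ≤ 3^(k+1) * ((4/3)^(k+1))^n * ‖q‖ ^ (n+3) := by
          apply mul_le_mul_of_nonneg_right (sigma_tail_le k n) (by positivity)
      _ = 3^(k+1) * ‖q‖^3 * (((4/3:ℝ)^(k+1))^n * ‖q‖^n) := by ring
      _ = _ := by ring

lemma series_split (k : ℕ) {q : ℂ} (h2 : (2:ℝ) ^ (k+1) * ‖q‖ < 1) :
    ∑' n : ℕ, (sigma' k (n+1) : ℂ) * q ^ (n+1)
      = (sigma' k 1 : ℂ) * q + (sigma' k 2 : ℂ) * q ^ 2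
        + ∑' n : ℕ, (sigma' k (n+3) : ℂ) * q ^ (n+3) := by
  have hsum := summable_sigma k h2
  have h := Summable.sum_add_tsum_nat_add (f := fun n : ℕ => (sigma' k (n+1) : ℂ) * q ^ (n+1)) 2 hsum
  rw [Finset.sum_range_succ, Finset.sum_range_one] at h
  have he : (fun n : ℕ => (sigma' k (n+2+1) : ℂ) * q ^ (n+2+1))
      = (fun n : ℕ => (sigma' k (n+3) : ℂ) * q ^ (n+3)) := by
    funext n; norm_num [Nat.add_assoc]
  rw [← h]
  simp only [show ∀ n:ℕ, n+2+1 = n+3 from fun n => by omega]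
  norm_num

lemma sigma1_1 : sigma' 1 1 = 1 := by decide +kernel
lemma sigma1_2 : sigma' 1 2 = 3 := by decide +kernel
lemma sigma3_1 : sigma' 3 1 = 1 := by decide +kernel
lemma sigma3_2 : sigma' 3 2 = 9 := by decide +kernel
lemma sigma5_1 : sigma' 5 1 = 1 := by decide +kernel
lemma sigma5_2 : sigma' 5 2 = 33 := by decide +kernel

lemma exp_big : (228:ℝ) ≤ Real.exp (Real.pi * Real.sqrt 3) := by
  have hpi : (3.141592:ℝ) ≤ Real.pi := Real.pi_gt_d6.le
  have hs3 : (1.732:ℝ) ≤ Real.sqrt 3 :=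
    (Real.le_sqrt (by norm_num) (by norm_num)).2 (by norm_num)
  have h54 : (5.4412:ℝ) ≤ Real.pi * Real.sqrt 3 := by nlinarith
  have key : (228:ℝ) ≤ Real.exp 5.4412 := by
    have h1 : Real.exp 5.4412 = Real.exp 1 ^ 5 * Real.exp 0.4412 := by
      rw [← Real.exp_nat_mul, ← Real.exp_add]; norm_num
    have h2 : (2.7182818:ℝ) ≤ Real.exp 1 := Real.exp_one_gt_d9.le.trans' (by norm_num)
    have h3 : (1.5528:ℝ) ≤ Real.exp 0.4412 := by
      have := Real.sum_le_exp_of_nonneg (x := 0.4412) (by norm_num) 4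
      rw [Finset.sum_range_succ, Finset.sum_range_succ, Finset.sum_range_succ,
        Finset.sum_range_one] at this
      norm_num [Nat.factorial] at this
      linarith
    calc (228:ℝ) ≤ 2.7182818 ^ 5 * 1.5528 := by norm_num
      _ ≤ Real.exp 1 ^ 5 * Real.exp 0.4412 := by
          apply mul_le_mul (pow_le_pow_left₀ (by norm_num) h2 5) h3 (by norm_num)
          positivity
      _ = Real.exp 5.4412 := h1.symm
  calc (228:ℝ) ≤ Real.exp 5.4412 := key
    _ ≤ Real.exp (Real.pi * Real.sqrt 3) := Real.exp_le_exp.2 h54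

lemma qpar_norm_le {τ : ℂ} (him0 : 0 < τ.im) (habs : 1 ≤ ‖τ‖)
    (hre1 : -(1/2) ≤ τ.re) (hre2 : τ.re ≤ 1/2) : ‖qpar τ‖ ≤ 1/228 := by
  have him : Real.sqrt 3 ≤ 2 * τ.im := by
    have h1 : 1 ≤ τ.re^2 + τ.im^2 := by
      have := Complex.sq_norm τ
      have h2 : (1:ℝ) ≤ ‖τ‖ ^ 2 := one_le_pow₀ habs
      rw [Complex.sq_norm, Complex.normSq_apply] at h2
      nlinarith
    have h3 : τ.re ^ 2 ≤ 1/4 := by nlinarith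
    have h4 : (3:ℝ)/4 ≤ τ.im ^ 2 := by nlinarith
    rw [show 2 * τ.im = Real.sqrt ((2*τ.im)^2) from
      (Real.sqrt_sq (by linarith)).symm]
    apply Real.sqrt_le_sqrt
    nlinarith
  have hre : (2 * (Real.pi:ℂ) * Complex.I * τ).re = -(2 * Real.pi * τ.im) := by
    simp [Complex.mul_re, Complex.mul_im]
  have hnorm : ‖qpar τ‖ = Real.exp (-(2 * Real.pi * τ.im)) := by
    rw [qpar, Complex.norm_exp, hre]
  rw [hnorm, Real.exp_neg]
  rw [show (1:ℝ)/228 = 228⁻¹ by norm_num]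
  apply inv_anti₀ (by norm_num)
  calc (228:ℝ) ≤ Real.exp (Real.pi * Real.sqrt 3) := exp_big
    _ ≤ Real.exp (2 * Real.pi * τ.im) := by
        apply Real.exp_le_exp.2
        have hπ : 0 < Real.pi := Real.pi_pos
        nlinarith

set_option maxHeartbeats 2000000 in
/-- For `τ` in the closed standard fundamental domain,
`|χ(τ) - q⁻¹| < 39960` and `|ξ(τ) - q⁻¹| < 39032`. -/
theorem weak_chi_xi_tail_bounds (τ : ℂ) (hτ : inF τ) :
    ‖χ' τ - (qpar τ)⁻¹‖ < 39960 ∧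
    ‖ξ' τ - (qpar τ)⁻¹‖ < 39032 := by
  obtain ⟨him, habs, hre1, hre2⟩ := hτ
  have hq : ‖qpar τ‖ ≤ 1/228 := qpar_norm_le him habs hre1 hre2
  set q : ℂ := qpar τ with hqdef
  have hq0 : q ≠ 0 := Complex.exp_ne_zero _
  set r : ℝ := ‖q‖ with hrdef
  have hr0 : 0 < r := norm_pos_iff.2 hq0
  have hr : r ≤ 1/228 := hq
  set sS : ℂ := ∑' n : ℕ, (sigma' 1 (n+1) : ℂ) * q^(n+1) with hsS
  set sA : ℂ := ∑' n : ℕ, (sigma' 3 (n+1) : ℂ) * q^(n+1) with hsA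
  set sB : ℂ := ∑' n : ℕ, (sigma' 5 (n+1) : ℂ) * q^(n+1) with hsB
  have hE2 : E2 τ = 1 - 24 * sS := rfl
  have hE4 : E4 τ = 1 + 240 * sA := rfl
  have hE6 : E6 τ = 1 - 504 * sB := rfl
  -- splits
  have hsplS := series_split 1 (q := q)
    (by rw [show ((2:ℝ))^(1+1) = 4 by norm_num, ← hrdef]; linarith)
  have hsplA := series_split 3 (q := q)
    (by rw [show ((2:ℝ))^(3+1) = 16 by norm_num, ← hrdef]; linarith)
  have hsplB := series_split 5 (q := q)
    (by rw [show ((2:ℝ))^(5+1) = 64 by norm_num, ← hrdef]; linarith)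
  rw [sigma1_1, sigma1_2] at hsplS
  rw [sigma3_1, sigma3_2] at hsplA
  rw [sigma5_1, sigma5_2] at hsplB
  push_cast at hsplS hsplA hsplB
  rw [← hsS] at hsplS
  rw [← hsA] at hsplA
  rw [← hsB] at hsplB
  -- tail bounds
  have hT1 := tail_bound 1 (q := q)
    (by rw [show ((4:ℝ)/3)^(1+1) = 16/9 by norm_num, ← hrdef]; linarith)
  have hT3 := tail_bound 3 (q := q)
    (by rw [show ((4:ℝ)/3)^(3+1) = 256/81 by norm_num, ← hrdef]; linarith)
  have hT5 := tail_bound 5 (q := q)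
    (by rw [show ((4:ℝ)/3)^(5+1) = 4096/729 by norm_num, ← hrdef]; linarith)
  rw [show ((3:ℝ))^(1+1) = 9 by norm_num] at hT1
  rw [show ((3:ℝ))^(3+1) = 81 by norm_num] at hT3
  rw [show ((3:ℝ))^(5+1) = 729 by norm_num] at hT5
  rw [← hrdef] at hT1 hT3 hT5
  -- r powers
  have hrq : ‖q‖ = r := hrdef.symm
  have hr2 : r^2 ≤ r * (1/228) := by nlinarith
  have hr3 : r^3 ≤ r^2 * (1/228) := by nlinarith
  clear hqdef hrdef hsS hsA hsB
  clear_value sS sA sB r q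
  -- basic series bounds
  have hSb : ‖sS‖ ≤ 51/50 * r := by
    rw [hsplS]
    calc ‖1*q + 3*q^2 + ∑' n : ℕ, (sigma' 1 (n+3) : ℂ) * q^(n+3)‖
        ≤ ‖1*q + 3*q^2‖ + ‖∑' n : ℕ, (sigma' 1 (n+3) : ℂ) * q^(n+3)‖ := norm_add_le _ _
      _ ≤ ‖1*q‖ + ‖3*q^2‖ + ‖∑' n : ℕ, (sigma' 1 (n+3) : ℂ) * q^(n+3)‖ := by
          linarith [norm_add_le (1*q) (3*q^2)]
      _ ≤ r + 3*r^2 + 9 * (38/37) * r^3 := by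
          have h1 : ‖(1:ℂ)*q‖ = r := by rw [one_mul, hrq]
          have h2 : ‖(3:ℂ)*q^2‖ = 3*r^2 := by
            rw [norm_mul, norm_pow, RCLike.norm_ofNat, hrq]
          rw [h1, h2]; linarith [hT1]
      _ ≤ 51/50 * r := by nlinarith
  have hA1 : ‖sA - q‖ ≤ 47/5 * r^2 := by
    have : sA - q = 9*q^2 + ∑' n : ℕ, (sigma' 3 (n+3) : ℂ) * q^(n+3) := by
      rw [hsplA]; ring
    rw [this]
    calc ‖9*q^2 + ∑' n : ℕ, (sigma' 3 (n+3) : ℂ) * q^(n+3)‖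
        ≤ ‖(9:ℂ)*q^2‖ + ‖∑' n : ℕ, (sigma' 3 (n+3) : ℂ) * q^(n+3)‖ := norm_add_le _ _
      _ ≤ 9*r^2 + 81 * (38/37) * r^3 := by
          have h2 : ‖(9:ℂ)*q^2‖ = 9*r^2 := by rw [norm_mul, norm_pow, RCLike.norm_ofNat, hrq]
          rw [h2]; linarith [hT3]
      _ ≤ 47/5 * r^2 := by nlinarith
  have hB1 : ‖sB - q‖ ≤ 363/10 * r^2 := by
    have : sB - q = 33*q^2 + ∑' n : ℕ, (sigma' 5 (n+3) : ℂ) * q^(n+3) := by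
      rw [hsplB]; ring
    rw [this]
    calc ‖33*q^2 + ∑' n : ℕ, (sigma' 5 (n+3) : ℂ) * q^(n+3)‖
        ≤ ‖(33:ℂ)*q^2‖ + ‖∑' n : ℕ, (sigma' 5 (n+3) : ℂ) * q^(n+3)‖ := norm_add_le _ _
      _ ≤ 33*r^2 + 729 * (38/37) * r^3 := by
          have h2 : ‖(33:ℂ)*q^2‖ = 33*r^2 := by rw [norm_mul, norm_pow, RCLike.norm_ofNat, hrq]
          rw [h2]; linarith [hT5]
      _ ≤ 363/10 * r^2 := by nlinarith
  have hA2 : ‖sA‖ ≤ 21/20 * r := by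
    calc ‖sA‖ = ‖q + (sA - q)‖ := by rw [show q + (sA - q) = sA from by ring]
      _ ≤ ‖q‖ + ‖sA - q‖ := norm_add_le _ _
      _ ≤ r + 47/5 * r^2 := by linarith
      _ ≤ 21/20 * r := by nlinarith
  have hB2 : ‖sB‖ ≤ 29/25 * r := by
    calc ‖sB‖ = ‖q + (sB - q)‖ := by rw [show q + (sB - q) = sB from by ring]
      _ ≤ ‖q‖ + ‖sB - q‖ := norm_add_le _ _
      _ ≤ r + 363/10 * r^2 := by linarith
      _ ≤ 29/25 * r := by nlinarith
  -- Delta bounds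
  have hΔeq : Δ' τ - q = (720*(sA - q) + 1008*(sB - q) + 172800*((sA - sB)*(sA + sB))
      - 81216*sB^2 + 13824000*sA^3)/1728 := by
    rw [show Δ' τ = (E4 τ^3 - E6 τ^2)/1728 from rfl, hE4, hE6]
    ring
  have hΔ1 : ‖Δ' τ - q‖ ≤ 174 * r^2 := by
    rw [hΔeq]
    have hAB1 : ‖sA - sB‖ ≤ 457/10 * r^2 := by
      calc ‖sA - sB‖ = ‖(sA - q) - (sB - q)‖ := (by rw [sub_sub_sub_cancel_right])
        _ ≤ ‖sA - q‖ + ‖sB - q‖ := norm_sub_le _ _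
        _ ≤ 457/10 * r^2 := by linarith
    have hAB2 : ‖sA + sB‖ ≤ 221/100 * r := by
      calc ‖sA + sB‖ ≤ ‖sA‖ + ‖sB‖ := norm_add_le _ _
        _ ≤ 221/100 * r := by linarith
    have hm : ‖(sA - sB)*(sA + sB)‖ ≤ (457/10 * r^2) * (221/100 * r) := by
      rw [norm_mul]
      exact mul_le_mul hAB1 hAB2 (norm_nonneg _) (by positivity)
    have hq2 : ‖sB^2‖ ≤ (29/25 * r)^2 := by
      rw [norm_pow]; exact pow_le_pow_left₀ (norm_nonneg _) hB2 2
    have hq3 : ‖sA^3‖ ≤ (21/20 * r)^3 := by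
      rw [norm_pow]; exact pow_le_pow_left₀ (norm_nonneg _) hA2 3
    have tri : ‖720*(sA - q) + 1008*(sB - q) + 172800*((sA - sB)*(sA + sB))
        - 81216*sB^2 + 13824000*sA^3‖
        ≤ 720*‖sA - q‖ + 1008*‖sB - q‖ + 172800*‖(sA - sB)*(sA + sB)‖
          + 81216*‖sB^2‖ + 13824000*‖sA^3‖ := by
      have t1 := norm_add_le (720*(sA - q) + 1008*(sB - q) + 172800*((sA - sB)*(sA + sB))
        - 81216*sB^2) (13824000*sA^3)
      have t2 := norm_sub_le (720*(sA - q) + 1008*(sB - q) + 172800*((sA - sB)*(sA + sB)))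
        (81216*sB^2)
      have t3 := norm_add_le (720*(sA - q) + 1008*(sB - q)) (172800*((sA - sB)*(sA + sB)))
      have t4 := norm_add_le (720*(sA - q)) (1008*(sB - q))
      have u1 : ‖(720:ℂ)*(sA - q)‖ = 720*‖sA - q‖ := by rw [norm_mul, RCLike.norm_ofNat]
      have u2 : ‖(1008:ℂ)*(sB - q)‖ = 1008*‖sB - q‖ := by rw [norm_mul, RCLike.norm_ofNat]
      have u3 : ‖(172800:ℂ)*((sA - sB)*(sA + sB))‖ = 172800*‖(sA - sB)*(sA + sB)‖ := by
        rw [norm_mul, RCLike.norm_ofNat]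
      have u4 : ‖(81216:ℂ)*sB^2‖ = 81216*‖sB^2‖ := by rw [norm_mul, RCLike.norm_ofNat]
      have u5 : ‖(13824000:ℂ)*sA^3‖ = 13824000*‖sA^3‖ := by rw [norm_mul, RCLike.norm_ofNat]
      linarith
    rw [norm_div]
    have h1728 : ‖(1728:ℂ)‖ = 1728 := by norm_num
    rw [h1728]
    rw [div_le_iff₀ (by norm_num : (0:ℝ) < 1728)]
    have hb : 720*‖sA - q‖ + 1008*‖sB - q‖ + 172800*‖(sA - sB)*(sA + sB)‖
          + 81216*‖sB^2‖ + 13824000*‖sA^3‖ ≤ 174 * r^2 * 1728 := by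
      nlinarith [hm, hq2, hq3, hA1, hB1, hr2, hr3, sq_nonneg r, hr0.le]
    linarith
  have hΔ2 : 9/38 * r ≤ ‖Δ' τ‖ := by
    have h := norm_sub_norm_le q (Δ' τ)
    have h2 : ‖q - Δ' τ‖ = ‖Δ' τ - q‖ := by rw [norm_sub_rev]
    rw [h2] at h
    nlinarith
  have hΔ0 : Δ' τ ≠ 0 := by
    intro h
    rw [h, norm_zero] at hΔ2
    nlinarith
  -- product bounds
  have hP : ‖E2 τ * E4 τ * E6 τ - 1‖ ≤ 1670 * r := by
    have hid : E2 τ * E4 τ * E6 τ - 1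
        = 240*sA - 24*sS - 504*sB - 5760*(sS*sA) - 120960*(sA*sB)
          + 12096*(sS*sB) + 2903040*(sS*(sA*sB)) := by
      rw [hE2, hE4, hE6]; ring
    rw [hid]
    have u1 : ‖(240:ℂ)*sA‖ ≤ 240*(21/20*r) := by
      rw [norm_mul, RCLike.norm_ofNat]; linarith
    have u2 : ‖(24:ℂ)*sS‖ ≤ 24*(51/50*r) := by
      rw [norm_mul, RCLike.norm_ofNat]; linarith
    have u3 : ‖(504:ℂ)*sB‖ ≤ 504*(29/25*r) := by
      rw [norm_mul, RCLike.norm_ofNat]; linarith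
    have u4 : ‖(5760:ℂ)*(sS*sA)‖ ≤ 5760*((51/50*r)*(21/20*r)) := by
      rw [norm_mul, norm_mul, RCLike.norm_ofNat]
      gcongr
    have u5 : ‖(120960:ℂ)*(sA*sB)‖ ≤ 120960*((21/20*r)*(29/25*r)) := by
      rw [norm_mul, norm_mul, RCLike.norm_ofNat]
      gcongr
    have u6 : ‖(12096:ℂ)*(sS*sB)‖ ≤ 12096*((51/50*r)*(29/25*r)) := by
      rw [norm_mul, norm_mul, RCLike.norm_ofNat]
      gcongr
    have u7 : ‖(2903040:ℂ)*(sS*(sA*sB))‖ ≤ 2903040*((51/50*r)*((21/20*r)*(29/25*r))) := by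
      rw [norm_mul, norm_mul, norm_mul, RCLike.norm_ofNat]
      gcongr
    have tri : ‖240*sA - 24*sS - 504*sB - 5760*(sS*sA) - 120960*(sA*sB)
          + 12096*(sS*sB) + 2903040*(sS*(sA*sB))‖
        ≤ ‖(240:ℂ)*sA‖ + ‖(24:ℂ)*sS‖ + ‖(504:ℂ)*sB‖ + ‖(5760:ℂ)*(sS*sA)‖
          + ‖(120960:ℂ)*(sA*sB)‖ + ‖(12096:ℂ)*(sS*sB)‖ + ‖(2903040:ℂ)*(sS*(sA*sB))‖ := by
      have t1 := norm_add_le (240*sA - 24*sS - 504*sB - 5760*(sS*sA) - 120960*(sA*sB)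
        + 12096*(sS*sB)) ((2903040:ℂ)*(sS*(sA*sB)))
      have t2 := norm_add_le (240*sA - 24*sS - 504*sB - 5760*(sS*sA) - 120960*(sA*sB))
        ((12096:ℂ)*(sS*sB))
      have t3 := norm_sub_le (240*sA - 24*sS - 504*sB - 5760*(sS*sA)) ((120960:ℂ)*(sA*sB))
      have t4 := norm_sub_le (240*sA - 24*sS - 504*sB) ((5760:ℂ)*(sS*sA))
      have t5 := norm_sub_le (240*sA - 24*sS) ((504:ℂ)*sB)
      have t6 := norm_sub_le ((240:ℂ)*sA) ((24:ℂ)*sS)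
      linarith
    calc ‖240*sA - 24*sS - 504*sB - 5760*(sS*sA) - 120960*(sA*sB)
          + 12096*(sS*sB) + 2903040*(sS*(sA*sB))‖
        ≤ ‖(240:ℂ)*sA‖ + ‖(24:ℂ)*sS‖ + ‖(504:ℂ)*sB‖ + ‖(5760:ℂ)*(sS*sA)‖
          + ‖(120960:ℂ)*(sA*sB)‖ + ‖(12096:ℂ)*(sS*sB)‖ + ‖(2903040:ℂ)*(sS*(sA*sB))‖ := tri
      _ ≤ 240*(21/20*r) + 24*(51/50*r) + 504*(29/25*r) + 5760*((51/50*r)*(21/20*r))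
          + 120960*((21/20*r)*(29/25*r)) + 12096*((51/50*r)*(29/25*r))
          + 2903040*((51/50*r)*((21/20*r)*(29/25*r))) := by
        linarith
      _ ≤ 1670 * r := by nlinarith
  have hPx : ‖E4 τ * E6 τ - 1‖ ≤ 1490 * r := by
    have hid : E4 τ * E6 τ - 1 = 240*sA - 504*sB - 120960*(sA*sB) := by
      rw [hE4, hE6]; ring
    rw [hid]
    have u1 : ‖(240:ℂ)*sA‖ ≤ 240*(21/20*r) := by
      rw [norm_mul, RCLike.norm_ofNat]; linarith
    have u3 : ‖(504:ℂ)*sB‖ ≤ 504*(29/25*r) := by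
      rw [norm_mul, RCLike.norm_ofNat]; linarith
    have u5 : ‖(120960:ℂ)*(sA*sB)‖ ≤ 120960*((21/20*r)*(29/25*r)) := by
      rw [norm_mul, norm_mul, RCLike.norm_ofNat]
      gcongr
    have t3 := norm_sub_le (240*sA - 504*sB) ((120960:ℂ)*(sA*sB))
    have t5 := norm_sub_le ((240:ℂ)*sA) ((504:ℂ)*sB)
    have : ‖240*sA - 504*sB - 120960*(sA*sB)‖
        ≤ 240*(21/20*r) + 504*(29/25*r) + 120960*((21/20*r)*(29/25*r)) := by linarith
    nlinarith
  -- final assembly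
  have hden : (0:ℝ) < ‖q‖ * ‖Δ' τ‖ := by
    rw [hrq]
    apply mul_pos hr0
    nlinarith
  constructor
  · have hχeq : χ' τ - q⁻¹ = (q * (E2 τ * E4 τ * E6 τ) - Δ' τ)/(q * Δ' τ) := by
      rw [χ']
      field_simp
    rw [hχeq, norm_div, norm_mul]
    rw [div_lt_iff₀ hden]
    have hnum : ‖q * (E2 τ * E4 τ * E6 τ) - Δ' τ‖ ≤ 1844 * r^2 := by
      have hid : q * (E2 τ * E4 τ * E6 τ) - Δ' τ
          = q * (E2 τ * E4 τ * E6 τ - 1) - (Δ' τ - q) := by ring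
      rw [hid]
      calc ‖q * (E2 τ * E4 τ * E6 τ - 1) - (Δ' τ - q)‖
          ≤ ‖q * (E2 τ * E4 τ * E6 τ - 1)‖ + ‖Δ' τ - q‖ := norm_sub_le _ _
        _ = r * ‖E2 τ * E4 τ * E6 τ - 1‖ + ‖Δ' τ - q‖ := by rw [norm_mul, hrq]
        _ ≤ r * (1670 * r) + 174 * r^2 := by
            have h := mul_le_mul_of_nonneg_left hP (norm_nonneg q)
            rw [hrq] at h
            linarith
        _ ≤ 1844 * r^2 := by nlinarith
    have hd2 : 39960 * (‖q‖ * ‖Δ' τ‖) ≥ 39960 * (r * (9/38 * r)) := by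
      have : r * (9/38 * r) ≤ ‖q‖ * ‖Δ' τ‖ := by
        rw [← hrq] at hΔ2 ⊢
        exact mul_le_mul_of_nonneg_left hΔ2 (norm_nonneg q)
      linarith
    nlinarith
  · have hχeq : ξ' τ - q⁻¹ = (q * (E4 τ * E6 τ) - Δ' τ)/(q * Δ' τ) := by
      rw [ξ']
      field_simp
    rw [hχeq, norm_div, norm_mul]
    rw [div_lt_iff₀ hden]
    have hnum : ‖q * (E4 τ * E6 τ) - Δ' τ‖ ≤ 1664 * r^2 := by
      have hid : q * (E4 τ * E6 τ) - Δ' τ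
          = q * (E4 τ * E6 τ - 1) - (Δ' τ - q) := by ring
      rw [hid]
      calc ‖q * (E4 τ * E6 τ - 1) - (Δ' τ - q)‖
          ≤ ‖q * (E4 τ * E6 τ - 1)‖ + ‖Δ' τ - q‖ := norm_sub_le _ _
        _ = r * ‖E4 τ * E6 τ - 1‖ + ‖Δ' τ - q‖ := by rw [norm_mul, hrq]
        _ ≤ r * (1490 * r) + 174 * r^2 := by
            have h := mul_le_mul_of_nonneg_left hPx (norm_nonneg q)
            rw [hrq] at h
            linarith
        _ ≤ 1664 * r^2 := by nlinarith
    have hd2 : 39032 * (‖q‖ * ‖Δ' τ‖) ≥ 39032 * (r * (9/38 * r)) := by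
      have : r * (9/38 * r) ≤ ‖q‖ * ‖Δ' τ‖ := by
        rw [← hrq] at hΔ2 ⊢
        exact mul_le_mul_of_nonneg_left hΔ2 (norm_nonneg q)
      linarith
    nlinarith
end
end

section
/- For every τ in the upper half-plane with Im τ ≥ √3/2, one has |(E₆(τ) − 1)/q| < 1095, where q = e^{2πiτ}. -/
open Complex

noncomputable section

lemma sigma5_le_pow (m : ℕ) : sigma' 5 m ≤ m ^ 6 := by
  calc sigma' 5 m ≤ ∑ d ∈ m.divisors, m ^ 5 := by
        apply Finset.sum_le_sum
        intro d hd
        exact Nat.pow_le_pow_left (Nat.divisor_le hd) 5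
    _ = m.divisors.card * m ^ 5 := by rw [Finset.sum_const, smul_eq_mul]
    _ ≤ m * m ^ 5 := by
        apply Nat.mul_le_mul_right
        calc m.divisors.card ≤ (Finset.Icc 1 m).card := by
              apply Finset.card_le_card
              intro d hd
              rw [Finset.mem_Icc]
              exact ⟨Nat.pos_of_mem_divisors hd, Nat.divisor_le hd⟩
          _ = m := by simp
    _ = m ^ 6 := by ring
lemma pow6_le (n : ℕ) (hn : 2 ≤ n) : (n+1)^6 ≤ 33 ^ n := by
  induction n with
  | zero => omega
  | succ k ih =>
    rcases Nat.lt_or_ge k 2 with h | h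
    · interval_cases k <;> norm_num at *
    · have h1 := ih (by omega)
      have h3 : (2*(k+2))^6 ≤ (3*(k+1))^6 := Nat.pow_le_pow_left (by omega) 6
      have h3' : 64*(k+2)^6 ≤ 729*(k+1)^6 := by
        rw [mul_pow, mul_pow] at h3; norm_num at h3; linarith
      have h2 : (k+2)^6 ≤ 33 * (k+1)^6 := by
        set a := (k+2)^6; set b := (k+1)^6; omega
      calc (k+1+1)^6 ≤ 33 * (k+1)^6 := h2
        _ ≤ 33 * 33 ^ k := by omega
        _ = 33 ^ (k+1) := by ring
lemma sigma5_le (n : ℕ) : sigma' 5 (n+1) ≤ 33 ^ n := by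
  match n with
  | 0 => norm_num [sigma']
  | 1 => norm_num [sigma', Nat.Prime.divisors Nat.prime_two]
  | (k+2) => exact (sigma5_le_pow (k+3)).trans (pow6_le (k+2) (by omega))

/-- For `Im τ ≥ √3/2`, `|(E₆(τ) - 1)/q| < 1095`. -/
theorem E6_tail_bound (τ : ℂ) (hτ : Real.sqrt 3 / 2 ≤ τ.im) :
    ‖(E6 τ - 1) / qpar τ‖ < 1095 := by
  set q := qpar τ with hqdef
  set r := ‖q‖ with hrdef
  have habs : r = Real.exp (-(2 * Real.pi * τ.im)) := by
    rw [hrdef, hqdef, qpar, Complex.norm_exp]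
    congr 1
    simp [Complex.mul_re, Complex.mul_im]
  have hr0 : 0 < r := habs ▸ Real.exp_pos _
  have hq0 : q ≠ 0 := by
    rw [hqdef, qpar]; exact Complex.exp_ne_zero _
  -- numeric bound r ≤ 1/62
  have hs3 : (1.7:ℝ) ≤ Real.sqrt 3 := by
    have : Real.sqrt 2.89 ≤ Real.sqrt 3 := Real.sqrt_le_sqrt (by norm_num)
    rwa [show (2.89:ℝ) = 1.7^2 by norm_num, Real.sqrt_sq (by norm_num)] at this
  have hpi : (3.14:ℝ) ≤ Real.pi := by
    have := Real.pi_gt_d6; linarith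
  have hexp5 : (62:ℝ) ≤ Real.exp 5 := by
    have h1 : Real.exp 5 = Real.exp 1 ^ 5 := by
      rw [← Real.exp_nat_mul]; norm_num
    have h2 := Real.exp_one_gt_d9
    have h3 : (2.7:ℝ)^5 ≤ Real.exp 1 ^ 5 := by
      apply pow_le_pow_left₀ (by norm_num) (by linarith)
    rw [h1]; nlinarith
  have him : (5:ℝ) ≤ 2 * Real.pi * τ.im := by
    have h1 : (5:ℝ) ≤ 3.14 * 1.7 := by norm_num
    have h2 : (3.14:ℝ) * 1.7 ≤ Real.pi * Real.sqrt 3 := by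
      apply mul_le_mul hpi hs3 (by norm_num) Real.pi_pos.le
    have h3 : Real.pi * Real.sqrt 3 ≤ 2 * Real.pi * τ.im := by
      have := mul_le_mul_of_nonneg_left hτ (by positivity : (0:ℝ) ≤ 2 * Real.pi)
      calc Real.pi * Real.sqrt 3 = 2 * Real.pi * (Real.sqrt 3 / 2) := by ring
        _ ≤ 2 * Real.pi * τ.im := this
    linarith
  have hr62 : r ≤ 1/62 := by
    rw [habs]
    have : Real.exp (-(2 * Real.pi * τ.im)) ≤ Real.exp (-5) :=
      Real.exp_le_exp.mpr (by linarith)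
    have h5 : Real.exp (-5) ≤ 1/62 := by
      rw [Real.exp_neg, show (1:ℝ)/62 = (62:ℝ)⁻¹ by norm_num]
      exact inv_anti₀ (by norm_num) hexp5
    linarith
  -- series bound
  have hg : Summable (fun n : ℕ => r * (33*r)^n) := by
    apply Summable.mul_left
    apply summable_geometric_of_lt_one (by positivity)
    linarith
  have hterm : ∀ n : ℕ, ‖(sigma' 5 (n + 1) : ℂ) * q ^ (n + 1)‖ ≤ r * (33*r)^n := by
    intro n
    rw [norm_mul, norm_pow]
    have h1 : ‖(sigma' 5 (n + 1) : ℂ)‖ ≤ (33:ℝ)^n := by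
      rw [Complex.norm_natCast]
      calc (sigma' 5 (n+1) : ℝ) ≤ ((33^n : ℕ) : ℝ) := by
            exact_mod_cast sigma5_le n
        _ = 33^n := by push_cast; ring
    have h2 : ‖q‖^(n+1) = r * r^n := by
      rw [pow_succ]; rw [← hrdef]; ring
    calc ‖(sigma' 5 (n + 1) : ℂ)‖ * ‖q‖^(n+1) ≤ 33^n * (r * r^n) := by
          rw [h2]
          apply mul_le_mul h1 (le_refl _) (by positivity) (by positivity)
      _ = r * (33*r)^n := by rw [mul_pow]; ring
  have hnormsum : Summable (fun n : ℕ => ‖(sigma' 5 (n + 1) : ℂ) * q ^ (n + 1)‖) :=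
    Summable.of_nonneg_of_le (fun n => norm_nonneg _) hterm hg
  set S := ∑' n : ℕ, (sigma' 5 (n + 1) : ℂ) * q ^ (n + 1) with hSdef
  have hSbound : ‖S‖ ≤ r * (1 - 33*r)⁻¹ := by
    calc ‖S‖ ≤ ∑' n, ‖(sigma' 5 (n + 1) : ℂ) * q ^ (n + 1)‖ := norm_tsum_le_tsum_norm hnormsum
      _ ≤ ∑' n : ℕ, r * (33*r)^n := Summable.tsum_le_tsum hterm hnormsum hg
      _ = r * ∑' n : ℕ, (33*r)^n := tsum_mul_left
      _ = r * (1 - 33*r)⁻¹ := by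
          rw [tsum_geometric_of_lt_one (by positivity) (by linarith)]
  have hE6 : E6 τ - 1 = -(504 * S) := by rw [E6]; ring
  rw [hE6, norm_div, norm_neg, norm_mul]
  have h504 : ‖(504:ℂ)‖ = 504 := by
    rw [show (504:ℂ) = ((504:ℝ):ℂ) by norm_num, Complex.norm_real]; norm_num
  rw [h504, ← hrdef]
  have hSabs : ‖S‖ = ‖S‖ := rfl
  have hinv : (1 - 33*r)⁻¹ ≤ 62/29 := by
    have h1 : (29:ℝ)/62 ≤ 1 - 33*r := by linarith
    have := inv_anti₀ (by norm_num : (0:ℝ) < 29/62) h1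
    calc (1-33*r)⁻¹ ≤ ((29:ℝ)/62)⁻¹ := this
      _ = 62/29 := by norm_num
  have key : 504 * ‖S‖ / r ≤ 504 * (62/29) := by
    rw [div_le_iff₀ hr0, hSabs]
    calc 504 * ‖S‖ ≤ 504 * (r * (1-33*r)⁻¹) := by linarith
      _ ≤ 504 * (r * (62/29)) := by
          have := mul_le_mul_of_nonneg_left hinv hr0.le
          nlinarith
      _ = 504 * (62/29) * r := by ring
  linarith [key]
end
end

section
/- For every τ in the upper half-plane with Im τ ≥ √3/2, one has |(E₄(τ)³ − 1)/q| < 2110, where q = e^{2πiτ}. -/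
open Complex

noncomputable section

lemma pow4_le (m : ℕ) : (m + 3) ^ 4 ≤ 162 * 2 ^ m := by
  induction m with
  | zero => norm_num
  | succ k ih =>
    rcases Nat.lt_or_ge k 3 with h | h
    · interval_cases k <;> norm_num
    · have h' : (3 : ℤ) ≤ (k : ℤ) := by exact_mod_cast h
      have h2 : (k + 4) ^ 4 ≤ 2 * (k + 3) ^ 4 := by
        zify
        nlinarith [h', sq_nonneg ((k : ℤ) - 3)]
      calc (k + 1 + 3) ^ 4 = (k + 4) ^ 4 := by ring_nf
        _ ≤ 2 * (k + 3) ^ 4 := h2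
        _ ≤ 2 * (162 * 2 ^ k) := by omega
        _ = 162 * 2 ^ (k + 1) := by ring

lemma sigma'_le_s9 (n : ℕ) : sigma' 3 n ≤ n ^ 4 := by
  unfold sigma'
  calc ∑ d ∈ n.divisors, d ^ 3 ≤ ∑ d ∈ n.divisors, n ^ 3 :=
        Finset.sum_le_sum fun d hd => Nat.pow_le_pow_left (Nat.divisor_le hd) 3
    _ = n.divisors.card * n ^ 3 := by rw [Finset.sum_const, smul_eq_mul]
    _ ≤ n * n ^ 3 := by
        gcongr
        calc n.divisors.card ≤ (Finset.Icc 1 n).card := by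
              apply Finset.card_le_card
              intro d hd
              exact Finset.mem_Icc.2 ⟨Nat.pos_of_mem_divisors hd, Nat.divisor_le hd⟩
          _ = n := by simp
    _ = n ^ 4 := by ring

set_option maxHeartbeats 1000000 in
/-- For `Im τ ≥ √3/2`, `|(E₄(τ)³ - 1)/q| < 2110`. -/
theorem E4_cubed_tail_bound (τ : ℂ) (hτ : Real.sqrt 3 / 2 ≤ τ.im) :
    ‖(E4 τ ^ 3 - 1) / qpar τ‖ < 2110 := by
  set q : ℂ := qpar τ with hq
  set r : ℝ := ‖q‖ with hrdef
  have hre : (2 * (Real.pi : ℂ) * Complex.I * τ).re = -(2 * Real.pi * τ.im) := by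
    simp [Complex.mul_re, Complex.mul_im]
  have hrval : r = Real.exp (-(2 * Real.pi * τ.im)) := by
    rw [hrdef, hq, qpar, Complex.norm_exp, hre]
  have hrpos : 0 < r := by rw [hrval]; exact Real.exp_pos _
  -- numeric bound on r
  have hs3 : (1.732 : ℝ) ≤ Real.sqrt 3 := by
    rw [show (1.732 : ℝ) = Real.sqrt (1.732 ^ 2) by rw [Real.sqrt_sq (by norm_num)]]
    exact Real.sqrt_le_sqrt (by norm_num)
  have hpi : (3.141592 : ℝ) < Real.pi := Real.pi_gt_d6
  have him : (5.441 : ℝ) ≤ 2 * Real.pi * τ.im := by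
    have h2im : (1.732 : ℝ) ≤ 2 * τ.im := by linarith
    nlinarith [hpi, h2im]
  have h225 : (225 : ℝ) ≤ Real.exp (2 * Real.pi * τ.im) := by
    have e1 : (2.7182818283 : ℝ) ≤ Real.exp 1 := Real.exp_one_gt_d9.le
    have e2 : (1.055125 : ℝ) ≤ Real.exp 0.055125 := by
      have := Real.add_one_le_exp (0.055125 : ℝ); linarith
    have key : Real.exp 1 ^ 5 * Real.exp 0.055125 ^ 8 = Real.exp 5.441 := by
      rw [← Real.exp_nat_mul, ← Real.exp_nat_mul, ← Real.exp_add]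
      norm_num
    have a1 : (2.7182818283 : ℝ) ^ 5 ≤ Real.exp 1 ^ 5 := pow_le_pow_left₀ (by norm_num) e1 5
    have a2 : (1.055125 : ℝ) ^ 8 ≤ Real.exp 0.055125 ^ 8 := pow_le_pow_left₀ (by norm_num) e2 8
    have h5 : (225 : ℝ) ≤ Real.exp 5.441 := by
      have hmul := mul_le_mul a1 a2 (by positivity) (by positivity)
      rw [key] at hmul
      nlinarith [hmul]
    calc (225 : ℝ) ≤ Real.exp 5.441 := h5
      _ ≤ _ := Real.exp_le_exp.2 him
  have hr : r ≤ 1 / 225 := by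
    rw [hrval, Real.exp_neg, inv_eq_one_div]
    exact one_div_le_one_div_of_le (by norm_num) h225
  have h2r : 2 * r < 1 := by linarith
  -- the series
  set S : ℂ := ∑' n : ℕ, (sigma' 3 (n + 1) : ℂ) * q ^ (n + 1) with hS
  have hE4 : E4 τ = 1 + 240 * S := by rw [E4, ← hq, ← hS]
  -- real majorant
  have hsum4 : Summable (fun n : ℕ => ((n : ℝ) + 1) ^ 4 * r ^ (n + 1)) := by
    have h := summable_pow_mul_geometric_of_norm_lt_one (R := ℝ) 4 (r := r)
      (by rw [Real.norm_eq_abs, abs_of_pos hrpos]; linarith)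
    have h2 := (summable_nat_add_iff 1).2 h
    refine h2.congr fun n => ?_
    push_cast
    ring
  have hgle : ∀ n : ℕ, (sigma' 3 (n + 1) : ℝ) * r ^ (n + 1) ≤ ((n : ℝ) + 1) ^ 4 * r ^ (n + 1) := by
    intro n
    have h1 : (sigma' 3 (n + 1) : ℝ) ≤ ((n : ℝ) + 1) ^ 4 := by
      calc (sigma' 3 (n + 1) : ℝ) ≤ (((n + 1) ^ 4 : ℕ) : ℝ) := by exact_mod_cast sigma'_le_s9 (n + 1)
        _ = ((n : ℝ) + 1) ^ 4 := by push_cast; ring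
    exact mul_le_mul_of_nonneg_right h1 (by positivity)
  have hgsum : Summable (fun n : ℕ => (sigma' 3 (n + 1) : ℝ) * r ^ (n + 1)) :=
    Summable.of_nonneg_of_le (fun n => by positivity) hgle hsum4
  have hnorm : ∀ n : ℕ, ‖(sigma' 3 (n + 1) : ℂ) * q ^ (n + 1)‖ = (sigma' 3 (n + 1) : ℝ) * r ^ (n + 1) := by
    intro n
    rw [norm_mul, norm_pow, Complex.norm_natCast, ← hrdef]
  have hSsum : Summable (fun n : ℕ => (sigma' 3 (n + 1) : ℂ) * q ^ (n + 1)) :=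
    Summable.of_norm (hgsum.congr fun n => (hnorm n).symm)
  have hSle : ‖S‖ ≤ ∑' n : ℕ, (sigma' 3 (n + 1) : ℝ) * r ^ (n + 1) := by
    rw [hS]
    calc ‖∑' n : ℕ, (sigma' 3 (n + 1) : ℂ) * q ^ (n + 1)‖
        ≤ ∑' n : ℕ, ‖(sigma' 3 (n + 1) : ℂ) * q ^ (n + 1)‖ :=
          norm_tsum_le_tsum_norm (hgsum.congr fun n => (hnorm n).symm)
      _ = _ := tsum_congr hnorm
  -- split off first two terms
  have hshift1 : Summable (fun n : ℕ => (sigma' 3 (n + 1 + 1) : ℝ) * r ^ (n + 1 + 1)) :=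
    (summable_nat_add_iff 1).2 hgsum
  have hshift2 : Summable (fun n : ℕ => (sigma' 3 (n + 2 + 1) : ℝ) * r ^ (n + 2 + 1)) :=
    (summable_nat_add_iff 2).2 hgsum
  have hsplit : ∑' n : ℕ, (sigma' 3 (n + 1) : ℝ) * r ^ (n + 1)
      = (sigma' 3 1 : ℝ) * r ^ 1 + ((sigma' 3 2 : ℝ) * r ^ 2
        + ∑' n : ℕ, (sigma' 3 (n + 1 + 1 + 1) : ℝ) * r ^ (n + 1 + 1 + 1)) := by
    rw [Summable.tsum_eq_zero_add hgsum, Summable.tsum_eq_zero_add hshift1]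
  -- tail bound
  have hgeo : Summable (fun n : ℕ => 162 * r ^ 3 * (2 * r) ^ n) :=
    (summable_geometric_of_lt_one (by positivity) h2r).mul_left _
  have htail : ∑' n : ℕ, (sigma' 3 (n + 1 + 1 + 1) : ℝ) * r ^ (n + 1 + 1 + 1)
      ≤ 162 * r ^ 3 * (1 - 2 * r)⁻¹ := by
    have hle : ∀ n : ℕ, (sigma' 3 (n + 1 + 1 + 1) : ℝ) * r ^ (n + 1 + 1 + 1)
        ≤ 162 * r ^ 3 * (2 * r) ^ n := by
      intro n
      have h3 : n + 1 + 1 + 1 = n + 3 := by omega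
      rw [h3]
      have h1 : (sigma' 3 (n + 3) : ℝ) ≤ 162 * 2 ^ n := by
        calc (sigma' 3 (n + 3) : ℝ) ≤ (((n + 3) ^ 4 : ℕ) : ℝ) := by exact_mod_cast sigma'_le_s9 (n + 3)
          _ ≤ ((162 * 2 ^ n : ℕ) : ℝ) := by exact_mod_cast pow4_le n
          _ = 162 * 2 ^ n := by push_cast; ring
      calc (sigma' 3 (n + 3) : ℝ) * r ^ (n + 3) ≤ (162 * 2 ^ n) * r ^ (n + 3) :=
            mul_le_mul_of_nonneg_right h1 (by positivity)
        _ = 162 * r ^ 3 * (2 * r) ^ n := by ring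
    have hsum3 : Summable (fun n : ℕ => (sigma' 3 (n + 1 + 1 + 1) : ℝ) * r ^ (n + 1 + 1 + 1)) := by
      refine hshift2.congr fun n => ?_
      have : n + 2 + 1 = n + 1 + 1 + 1 := by omega
      rw [this]
    calc ∑' n : ℕ, (sigma' 3 (n + 1 + 1 + 1) : ℝ) * r ^ (n + 1 + 1 + 1)
        ≤ ∑' n : ℕ, 162 * r ^ 3 * (2 * r) ^ n := Summable.tsum_le_tsum hle hsum3 hgeo
      _ = 162 * r ^ 3 * (1 - 2 * r)⁻¹ := by
          rw [tsum_mul_left, tsum_geometric_of_lt_one (by positivity) h2r]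
  -- numeric values of first terms
  have hv1 : sigma' 3 1 = 1 := by simp [sigma']
  have hv2 : sigma' 3 2 = 9 := by simp [sigma', Nat.Prime.divisors Nat.prime_two]
  have hinv : (1 - 2 * r)⁻¹ ≤ 225 / 223 := by
    rw [show (225 / 223 : ℝ) = (223 / 225)⁻¹ by norm_num]
    exact inv_anti₀ (by norm_num) (by linarith)
  have hSbound : ‖S‖ ≤ 21 / 20 * r := by
    have h1 : ‖S‖ ≤ r + 9 * r ^ 2 + 162 * r ^ 3 * (225 / 223) := by
      have h2 : 162 * r ^ 3 * (1 - 2 * r)⁻¹ ≤ 162 * r ^ 3 * (225 / 223) :=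
        mul_le_mul_of_nonneg_left hinv (by positivity)
      rw [hsplit, hv1, hv2] at hSle
      push_cast at hSle
      nlinarith [hSle, htail, h2]
    have hr2 : r ^ 2 ≤ r * (1 / 225) := by nlinarith
    have hr3 : r ^ 3 ≤ r * (1 / 225) ^ 2 := by nlinarith
    nlinarith [h1, hr2, hr3, hrpos]
  -- final assembly
  have hnum : E4 τ ^ 3 - 1 = 720 * S + 172800 * S ^ 2 + 13824000 * S ^ 3 := by
    rw [hE4]; ring
  rw [norm_div, hnum, ← hrdef]
  rw [div_lt_iff₀ hrpos]
  have habs : ‖720 * S + 172800 * S ^ 2 + 13824000 * S ^ 3‖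
      ≤ 720 * ‖S‖ + 172800 * ‖S‖ ^ 2 + 13824000 * ‖S‖ ^ 3 := by
    calc ‖720 * S + 172800 * S ^ 2 + 13824000 * S ^ 3‖
        ≤ ‖720 * S + 172800 * S ^ 2‖ + ‖13824000 * S ^ 3‖ :=
          norm_add_le _ _
      _ ≤ ‖720 * S‖ + ‖172800 * S ^ 2‖ + ‖13824000 * S ^ 3‖ := by
          have := norm_add_le (720 * S) (172800 * S ^ 2)
          linarith
      _ = 720 * ‖S‖ + 172800 * ‖S‖ ^ 2 + 13824000 * ‖S‖ ^ 3 := by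
          simp [norm_mul, norm_pow]
  have hs0 : (0 : ℝ) ≤ ‖S‖ := norm_nonneg _
  have hp2 : ‖S‖ ^ 2 ≤ (21 / 20 * r) ^ 2 := pow_le_pow_left₀ hs0 hSbound 2
  have hp3 : ‖S‖ ^ 3 ≤ (21 / 20 * r) ^ 3 := pow_le_pow_left₀ hs0 hSbound 3
  have hr2 : r ^ 2 ≤ r * (1 / 225) := by nlinarith
  have hr3 : r ^ 3 ≤ r * (1 / 225) ^ 2 := by nlinarith
  nlinarith [habs, hSbound, hp2, hp3, hr2, hr3, hrpos]
end
end

section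
/- For every τ in the upper half-plane with Im τ ≥ 2, one has |(Δ(τ) − q)/q²| < 3340, where q = e^{2πiτ}. -/
open Complex

noncomputable section

-- auxiliary lemmas

lemma sigma'_one (k : ℕ) : sigma' k 1 = 1 := by
  simp [sigma']

lemma sigma'_le_pow {k : ℕ} (hk : k ≤ 5) (n : ℕ) : sigma' k (n + 1) ≤ 64 ^ n := by
  have h1 : sigma' k (n + 1) ≤ (n + 1) ^ (k + 1) := by
    unfold sigma'
    calc ∑ d ∈ (n + 1).divisors, d ^ k
        ≤ ∑ _d ∈ (n + 1).divisors, (n + 1) ^ k := by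
          apply Finset.sum_le_sum
          intro d hd
          exact Nat.pow_le_pow_left (Nat.divisor_le hd) k
      _ = (n + 1).divisors.card * (n + 1) ^ k := by
          rw [Finset.sum_const, smul_eq_mul]
      _ ≤ (n + 1) * (n + 1) ^ k := by
          gcongr
          have hsub : (n + 1).divisors ⊆ Finset.Icc 1 (n + 1) := by
            intro d hd
            simp only [Finset.mem_Icc]
            exact ⟨Nat.pos_of_mem_divisors hd, Nat.divisor_le hd⟩
          calc (n + 1).divisors.card ≤ (Finset.Icc 1 (n + 1)).card :=
                Finset.card_le_card hsub
            _ = n + 1 := by simp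
      _ = (n + 1) ^ (k + 1) := by ring
  have h2 : (n + 1) ^ (k + 1) ≤ (n + 1) ^ 6 :=
    Nat.pow_le_pow_right (Nat.succ_pos n) (by omega)
  have h3 : (n + 1) ^ 6 ≤ 64 ^ n := by
    calc (n + 1) ^ 6 ≤ (2 ^ n) ^ 6 := Nat.pow_le_pow_left (Nat.lt_two_pow_self (n := n)) 6
      _ = 64 ^ n := by rw [← Nat.pow_mul, Nat.mul_comm, Nat.pow_mul]
  omega

lemma term_bound {k : ℕ} (hk : k ≤ 5) (x : ℂ) (n : ℕ) :
    ‖(sigma' k (n + 1) : ℂ) * x ^ (n + 1)‖ ≤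
      ‖x‖ * (64 * ‖x‖) ^ n := by
  rw [norm_mul, norm_pow, Complex.norm_natCast, mul_pow]
  have h : (sigma' k (n + 1) : ℝ) ≤ (64 : ℝ) ^ n := by
    exact_mod_cast sigma'_le_pow hk n
  calc (sigma' k (n + 1) : ℝ) * ‖x‖ ^ (n + 1)
      ≤ (64 : ℝ) ^ n * ‖x‖ ^ (n + 1) := by
        gcongr
    _ = ‖x‖ * ((64 : ℝ) ^ n * ‖x‖ ^ n) := by ring

lemma term_bound2 {k : ℕ} (hk : k ≤ 5) (x : ℂ) (n : ℕ) :
    ‖(sigma' k (n + 2) : ℂ) * x ^ (n + 2)‖ ≤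
      64 * ‖x‖ ^ 2 * (64 * ‖x‖) ^ n := by
  rw [norm_mul, norm_pow, Complex.norm_natCast, mul_pow]
  have h : (sigma' k (n + 2) : ℝ) ≤ (64 : ℝ) ^ (n + 1) := by
    exact_mod_cast sigma'_le_pow hk (n + 1)
  calc (sigma' k (n + 2) : ℝ) * ‖x‖ ^ (n + 2)
      ≤ (64 : ℝ) ^ (n + 1) * ‖x‖ ^ (n + 2) := by gcongr
    _ = 64 * ‖x‖ ^ 2 * ((64 : ℝ) ^ n * ‖x‖ ^ n) := by ring

lemma geo_facts {x : ℂ} (hx : ‖x‖ ≤ 1 / 100000) :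
    0 ≤ 64 * ‖x‖ ∧ 64 * ‖x‖ < 1 ∧
      (1 - 64 * ‖x‖)⁻¹ ≤ 2 := by
  have h0 : 0 ≤ ‖x‖ := norm_nonneg _
  refine ⟨by positivity, by linarith, ?_⟩
  rw [inv_le_comm₀ (by linarith) (by norm_num)]
  linarith

lemma summable_aux {k : ℕ} (hk : k ≤ 5) {x : ℂ} (hx : ‖x‖ ≤ 1 / 100000) :
    Summable (fun n : ℕ => (sigma' k (n + 1) : ℂ) * x ^ (n + 1)) := by
  obtain ⟨h0, h1, -⟩ := geo_facts hx
  apply Summable.of_norm_bounded (g := fun n => ‖x‖ * (64 * ‖x‖) ^ n)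
    (Summable.mul_left _ (summable_geometric_of_lt_one h0 h1))
  intro n
  exact term_bound hk x n

lemma S_bound {k : ℕ} (hk : k ≤ 5) {x : ℂ} (hx : ‖x‖ ≤ 1 / 100000) :
    ‖∑' n : ℕ, (sigma' k (n + 1) : ℂ) * x ^ (n + 1)‖ ≤ 2 * ‖x‖ := by
  obtain ⟨h0, h1, h2⟩ := geo_facts hx
  have h0' : 0 ≤ ‖x‖ := norm_nonneg _
  have hs : HasSum (fun n : ℕ => ‖x‖ * (64 * ‖x‖) ^ n)
      (‖x‖ * (1 - 64 * ‖x‖)⁻¹) :=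
    (hasSum_geometric_of_lt_one h0 h1).mul_left _
  have := tsum_of_norm_bounded hs (fun n => by
    exact term_bound hk x n)
  calc ‖∑' n : ℕ, (sigma' k (n + 1) : ℂ) * x ^ (n + 1)‖
      ≤ ‖x‖ * (1 - 64 * ‖x‖)⁻¹ := this
    _ ≤ ‖x‖ * 2 := by gcongr
    _ = 2 * ‖x‖ := by ring

lemma T_bound {k : ℕ} (hk : k ≤ 5) {x : ℂ} (hx : ‖x‖ ≤ 1 / 100000) :
    ‖∑' n : ℕ, (sigma' k (n + 2) : ℂ) * x ^ (n + 2)‖ ≤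
      128 * ‖x‖ ^ 2 := by
  obtain ⟨h0, h1, h2⟩ := geo_facts hx
  have h0' : 0 ≤ ‖x‖ := norm_nonneg _
  have hs : HasSum (fun n : ℕ => 64 * ‖x‖ ^ 2 * (64 * ‖x‖) ^ n)
      (64 * ‖x‖ ^ 2 * (1 - 64 * ‖x‖)⁻¹) :=
    (hasSum_geometric_of_lt_one h0 h1).mul_left _
  have := tsum_of_norm_bounded hs (fun n => by
    exact term_bound2 hk x n)
  calc ‖∑' n : ℕ, (sigma' k (n + 2) : ℂ) * x ^ (n + 2)‖
      ≤ 64 * ‖x‖ ^ 2 * (1 - 64 * ‖x‖)⁻¹ := this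
    _ ≤ 64 * ‖x‖ ^ 2 * 2 := by gcongr
    _ = 128 * ‖x‖ ^ 2 := by ring

lemma S_split {k : ℕ} (hk : k ≤ 5) {x : ℂ} (hx : ‖x‖ ≤ 1 / 100000) :
    (∑' n : ℕ, (sigma' k (n + 1) : ℂ) * x ^ (n + 1)) =
      x + ∑' n : ℕ, (sigma' k (n + 2) : ℂ) * x ^ (n + 2) := by
  rw [Summable.tsum_eq_zero_add (summable_aux hk hx)]
  simp [sigma'_one]

lemma qpar_abs_le {τ : ℂ} (hτ : 2 ≤ τ.im) : ‖qpar τ‖ ≤ 1 / 100000 := by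
  have hre : (2 * (Real.pi : ℂ) * Complex.I * τ).re = -(2 * Real.pi * τ.im) := by
    simp [Complex.mul_re, Complex.mul_im]
  rw [qpar, Complex.norm_exp, hre, Real.exp_neg]
  have hpi : (3 : ℝ) ≤ Real.pi := Real.pi_gt_three.le
  have h12 : (12 : ℝ) ≤ 2 * Real.pi * τ.im := by nlinarith [Real.pi_gt_three]
  have hexp : (100000 : ℝ) ≤ Real.exp (2 * Real.pi * τ.im) := by
    have h1 : Real.exp 12 ≤ Real.exp (2 * Real.pi * τ.im) := Real.exp_le_exp.mpr h12
    have h2 : (100000 : ℝ) ≤ Real.exp 12 := by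
      have he : (2.7 : ℝ) ≤ Real.exp 1 := by
        have := Real.exp_one_gt_d9
        linarith
      have : ((2.7 : ℝ)) ^ (12 : ℕ) ≤ (Real.exp 1) ^ (12 : ℕ) := by
        gcongr
      rw [← Real.exp_nat_mul] at this
      norm_num at this
      nlinarith [this]
    linarith
  calc (Real.exp (2 * Real.pi * τ.im))⁻¹ ≤ ((100000 : ℝ))⁻¹ := by
        apply inv_anti₀ (by norm_num) hexp
    _ = 1 / 100000 := by norm_num

/-- For `Im τ ≥ 2`, `|(Δ(τ) - q)/q²| < 3340`. -/
theorem disc_tail_bound_strong (τ : ℂ) (hτ : 2 ≤ τ.im) :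
    ‖(Δ' τ - qpar τ) / qpar τ ^ 2‖ < 3340 := by
  set x := qpar τ with hxdef
  have hx0 : x ≠ 0 := Complex.exp_ne_zero _
  have hx : ‖x‖ ≤ 1 / 100000 := qpar_abs_le hτ
  set r := ‖x‖ with hrdef
  have hr0 : 0 < r := norm_pos_iff.mpr hx0
  set A := ∑' n : ℕ, (sigma' 3 (n + 1) : ℂ) * x ^ (n + 1) with hA
  set B := ∑' n : ℕ, (sigma' 5 (n + 1) : ℂ) * x ^ (n + 1) with hB
  set T3 := ∑' n : ℕ, (sigma' 3 (n + 2) : ℂ) * x ^ (n + 2) with hT3def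
  set T5 := ∑' n : ℕ, (sigma' 5 (n + 2) : ℂ) * x ^ (n + 2) with hT5def
  have hSA : ‖A‖ ≤ 2 * r := S_bound (by norm_num) hx
  have hSB : ‖B‖ ≤ 2 * r := S_bound (by norm_num) hx
  have hTA : ‖T3‖ ≤ 128 * r ^ 2 := T_bound (by norm_num) hx
  have hTB : ‖T5‖ ≤ 128 * r ^ 2 := T_bound (by norm_num) hx
  have hA3 : A = x + T3 := S_split (by norm_num) hx
  have hB5 : B = x + T5 := S_split (by norm_num) hx
  have hE4 : E4 τ = 1 + 240 * A := rfl
  have hE6 : E6 τ = 1 - 504 * B := rfl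
  have expand : E4 τ ^ 3 - E6 τ ^ 2 - 1728 * x =
      720 * T3 + 1008 * T5 + 172800 * A ^ 2 + 13824000 * A ^ 3 - 254016 * B ^ 2 := by
    rw [hE4, hE6]
    have h1 : T3 = A - x := by rw [hA3]; ring
    have h2 : T5 = B - x := by rw [hB5]; ring
    rw [h1, h2]; ring
  have key : ‖E4 τ ^ 3 - E6 τ ^ 2 - 1728 * x‖ ≤ 1930000 * r ^ 2 := by
    rw [expand]
    have tri : ‖720 * T3 + 1008 * T5 + 172800 * A ^ 2 + 13824000 * A ^ 3
        - 254016 * B ^ 2‖ ≤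
        720 * ‖T3‖ + 1008 * ‖T5‖ + 172800 * ‖A‖ ^ 2 +
          13824000 * ‖A‖ ^ 3 + 254016 * ‖B‖ ^ 2 := by
      calc ‖720 * T3 + 1008 * T5 + 172800 * A ^ 2 + 13824000 * A ^ 3 - 254016 * B ^ 2‖
          ≤ ‖720 * T3 + 1008 * T5 + 172800 * A ^ 2 + 13824000 * A ^ 3‖ + ‖254016 * B ^ 2‖ :=
            norm_sub_le _ _
        _ ≤ ‖720 * T3 + 1008 * T5 + 172800 * A ^ 2‖ + ‖13824000 * A ^ 3‖ + ‖254016 * B ^ 2‖ := by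
            gcongr; exact norm_add_le _ _
        _ ≤ ‖720 * T3 + 1008 * T5‖ + ‖172800 * A ^ 2‖ + ‖13824000 * A ^ 3‖
              + ‖254016 * B ^ 2‖ := by gcongr; exact norm_add_le _ _
        _ ≤ ‖720 * T3‖ + ‖1008 * T5‖ + ‖172800 * A ^ 2‖ + ‖13824000 * A ^ 3‖
              + ‖254016 * B ^ 2‖ := by gcongr; exact norm_add_le _ _
        _ = 720 * ‖T3‖ + 1008 * ‖T5‖ + 172800 * ‖A‖ ^ 2 + 13824000 * ‖A‖ ^ 3
              + 254016 * ‖B‖ ^ 2 := by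
            simp [norm_mul, norm_pow]
    have hAnn : 0 ≤ ‖A‖ := norm_nonneg _
    have hBnn : 0 ≤ ‖B‖ := norm_nonneg _
    have hA2 : ‖A‖ ^ 2 ≤ 4 * r ^ 2 := by nlinarith
    have hA3' : ‖A‖ ^ 3 ≤ 8 * r ^ 3 := by nlinarith
    have hB2 : ‖B‖ ^ 2 ≤ 4 * r ^ 2 := by nlinarith
    have hr3 : r ^ 3 ≤ (1 / 100000) * r ^ 2 := by nlinarith
    calc ‖720 * T3 + 1008 * T5 + 172800 * A ^ 2 + 13824000 * A ^ 3
        - 254016 * B ^ 2‖ ≤ _ := tri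
      _ ≤ 1930000 * r ^ 2 := by nlinarith
  have hrw : ‖(Δ' τ - x) / x ^ 2‖ =
      ‖E4 τ ^ 3 - E6 τ ^ 2 - 1728 * x‖ / (1728 * r ^ 2) := by
    have hΔ : Δ' τ - x = (E4 τ ^ 3 - E6 τ ^ 2 - 1728 * x) / 1728 := by
      rw [Δ']; ring
    rw [hΔ, div_div, norm_div, norm_mul, norm_pow]
    norm_num
    rfl
  rw [hrw, div_lt_iff₀ (by positivity)]
  nlinarith [key, sq_nonneg r, mul_pos hr0 hr0]
end
end

section
/- For every τ in the upper half-plane with Im τ ≥ 1.5, one has |(Δ(τ) − q)/q²| < 3700, where q = e^{2πiτ}. -/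
open Complex

noncomputable section

lemma sigma'_le_nat (k n : ℕ) : sigma' k n ≤ (2 ^ (k + 1)) ^ n := by
  rcases Nat.eq_zero_or_pos n with h | h
  · subst h; simp [sigma']
  · have h1 : sigma' k n ≤ ∑ _d ∈ n.divisors, n ^ k := by
      apply Finset.sum_le_sum
      intro d hd
      exact Nat.pow_le_pow_left (Nat.divisor_le hd) k
    have h2 : (∑ _d ∈ n.divisors, n ^ k) = n.divisors.card * n ^ k := by
      simp [Finset.sum_const, Nat.smul_one_eq_cast]
    have h3 : n.divisors.card ≤ n := by
      have hsub : n.divisors ⊆ Finset.Icc 1 n := by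
        intro d hd
        simp only [Finset.mem_Icc]
        exact ⟨Nat.pos_of_mem_divisors hd, Nat.divisor_le hd⟩
      calc n.divisors.card ≤ (Finset.Icc 1 n).card := Finset.card_le_card hsub
        _ = n := by simp
    have h4 : n ^ (k + 1) ≤ (2 ^ n) ^ (k + 1) :=
      Nat.pow_le_pow_left (Nat.le_of_lt (Nat.lt_two_pow_self (n := n))) _
    calc sigma' k n ≤ n.divisors.card * n ^ k := by rw [← h2]; exact h1
      _ ≤ n * n ^ k := Nat.mul_le_mul_right _ h3
      _ = n ^ (k + 1) := by ring
      _ ≤ (2 ^ n) ^ (k + 1) := h4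
      _ = (2 ^ (k + 1)) ^ n := by rw [← pow_mul, ← pow_mul, Nat.mul_comm]

lemma sigma'_le_real (k n : ℕ) : (sigma' k n : ℝ) ≤ ((2:ℝ) ^ (k + 1)) ^ n := by
  have := sigma'_le_nat k n
  calc (sigma' k n : ℝ) ≤ (((2 ^ (k + 1)) ^ n : ℕ) : ℝ) := by exact_mod_cast this
    _ = ((2:ℝ) ^ (k + 1)) ^ n := by push_cast; ring

lemma norm_tsum_le_geom (g : ℕ → ℂ) (C c : ℝ) (hC : 0 ≤ C) (hc0 : 0 ≤ c) (hc1 : c < 1)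
    (h : ∀ n, ‖g n‖ ≤ C * c ^ n) : ‖∑' n, g n‖ ≤ C / (1 - c) := by
  have hs : Summable (fun n : ℕ => C * c ^ n) :=
    (summable_geometric_of_lt_one hc0 hc1).mul_left C
  have hgn : Summable (fun n => ‖g n‖) :=
    Summable.of_nonneg_of_le (fun _ => norm_nonneg _) h hs
  calc ‖∑' n, g n‖ ≤ ∑' n, ‖g n‖ := norm_tsum_le_tsum_norm hgn
    _ ≤ ∑' n : ℕ, C * c ^ n := Summable.tsum_le_tsum h hgn hs
    _ = C * (1 - c)⁻¹ := by rw [tsum_mul_left, tsum_geometric_of_lt_one hc0 hc1]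
    _ = C / (1 - c) := (div_eq_mul_inv _ _).symm

set_option maxHeartbeats 1000000 in
/-- For `Im τ ≥ 1.5`, `|(Δ(τ) - q)/q²| < 3700`. -/
theorem disc_tail_bound_medium (τ : ℂ) (hτ : 1.5 ≤ τ.im) :
    ‖(Δ' τ - qpar τ) / qpar τ ^ 2‖ < 3700 := by
  have hq0 : qpar τ ≠ 0 := Complex.exp_ne_zero _
  set r : ℝ := ‖qpar τ‖ with hrdef
  have hr0 : 0 < r := norm_pos_iff.mpr hq0
  -- r ≤ 1/8000
  have hrval : r = Real.exp (-(2 * Real.pi * τ.im)) := by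
    rw [hrdef]
    show ‖Complex.exp _‖ = _
    rw [Complex.norm_exp]
    congr 1
    simp [Complex.mul_re, Complex.mul_im, Complex.I_re, Complex.I_im]
  have hr8 : r ≤ 1 / 8000 := by
    rw [hrval]
    have hpi : (3:ℝ) < Real.pi := Real.pi_gt_three
    have h1 : -(2 * Real.pi * τ.im) ≤ -9 := by nlinarith
    calc Real.exp (-(2 * Real.pi * τ.im)) ≤ Real.exp (-9) := Real.exp_le_exp.mpr h1
      _ ≤ 1 / 8000 := by
        rw [Real.exp_neg]
        rw [div_eq_inv_mul, mul_one]
        apply inv_anti₀ (by norm_num)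
        have h9 : (8000:ℝ) ≤ 2.7182818283 ^ (9:ℕ) := by norm_num
        calc (8000:ℝ) ≤ 2.7182818283 ^ (9:ℕ) := h9
          _ ≤ Real.exp 1 ^ (9:ℕ) := by
            apply pow_le_pow_left₀ (by norm_num) (le_of_lt Real.exp_one_gt_d9)
          _ = Real.exp 9 := by
            rw [← Real.exp_nat_mul]; norm_num
  have h160 : (0:ℝ) ≤ 16 * r := by positivity
  have h16 : 16 * r < 1 := by linarith
  have h640 : (0:ℝ) ≤ 64 * r := by positivity
  have h64 : 64 * r < 1 := by linarith
  -- termwise bounds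
  have hA3 : ∀ m : ℕ, ‖(sigma' 3 m : ℂ) * qpar τ ^ m‖ ≤ (16 * r) ^ m := by
    intro m
    rw [norm_mul, norm_pow, Complex.norm_natCast, ← hrdef, mul_pow]
    apply mul_le_mul_of_nonneg_right _ (by positivity)
    have := sigma'_le_real 3 m
    norm_num at this
    exact this
  have hA5 : ∀ m : ℕ, ‖(sigma' 5 m : ℂ) * qpar τ ^ m‖ ≤ (64 * r) ^ m := by
    intro m
    rw [norm_mul, norm_pow, Complex.norm_natCast, ← hrdef, mul_pow]
    apply mul_le_mul_of_nonneg_right _ (by positivity)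
    have := sigma'_le_real 5 m
    norm_num at this
    exact this
  have hgs3 : Summable (fun n : ℕ => (16 * r) ^ (n + 1)) := by
    simpa [pow_succ, mul_comm] using
      ((summable_geometric_of_lt_one h160 h16).mul_left (16 * r))
  have hgs5 : Summable (fun n : ℕ => (64 * r) ^ (n + 1)) := by
    simpa [pow_succ, mul_comm] using
      ((summable_geometric_of_lt_one h640 h64).mul_left (64 * r))
  have hs3 : Summable (fun n : ℕ => (sigma' 3 (n + 1) : ℂ) * qpar τ ^ (n + 1)) :=
    Summable.of_norm_bounded hgs3 (fun n => hA3 (n + 1))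
  have hs5 : Summable (fun n : ℕ => (sigma' 5 (n + 1) : ℂ) * qpar τ ^ (n + 1)) :=
    Summable.of_norm_bounded hgs5 (fun n => hA5 (n + 1))
  set A : ℂ := ∑' n : ℕ, (sigma' 3 (n + 1) : ℂ) * qpar τ ^ (n + 1) with hAdef
  set B : ℂ := ∑' n : ℕ, (sigma' 5 (n + 1) : ℂ) * qpar τ ^ (n + 1) with hBdef
  have hσ31 : (sigma' 3 1 : ℂ) = 1 := by norm_num [sigma']
  have hσ51 : (sigma' 5 1 : ℂ) = 1 := by norm_num [sigma']
  have hAq : A - qpar τ = ∑' n : ℕ, (sigma' 3 (n + 2) : ℂ) * qpar τ ^ (n + 2) := by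
    rw [hAdef, Summable.tsum_eq_zero_add hs3, hσ31]
    rw [one_mul, pow_one]
    exact add_sub_cancel_left _ _
  have hBq : B - qpar τ = ∑' n : ℕ, (sigma' 5 (n + 2) : ℂ) * qpar τ ^ (n + 2) := by
    rw [hBdef, Summable.tsum_eq_zero_add hs5, hσ51]
    rw [one_mul, pow_one]
    exact add_sub_cancel_left _ _
  have hAt : ‖A - qpar τ‖ ≤ 256 * r ^ 2 / (1 - 16 * r) := by
    rw [hAq]
    apply norm_tsum_le_geom _ (256 * r ^ 2) (16 * r) (by positivity) h160 h16
    intro n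
    calc ‖(sigma' 3 (n + 2) : ℂ) * qpar τ ^ (n + 2)‖ ≤ (16 * r) ^ (n + 2) := hA3 (n + 2)
      _ = 256 * r ^ 2 * (16 * r) ^ n := by ring
  have hBt : ‖B - qpar τ‖ ≤ 4096 * r ^ 2 / (1 - 64 * r) := by
    rw [hBq]
    apply norm_tsum_le_geom _ (4096 * r ^ 2) (64 * r) (by positivity) h640 h64
    intro n
    calc ‖(sigma' 5 (n + 2) : ℂ) * qpar τ ^ (n + 2)‖ ≤ (64 * r) ^ (n + 2) := hA5 (n + 2)
      _ = 4096 * r ^ 2 * (64 * r) ^ n := by ring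
  -- clean bounds
  have hAt' : ‖A - qpar τ‖ ≤ 259 * r ^ 2 := by
    refine hAt.trans ?_
    rw [div_le_iff₀ (by nlinarith)]
    nlinarith [sq_nonneg r, mul_pos hr0 hr0]
  have hBt' : ‖B - qpar τ‖ ≤ 4139 * r ^ 2 := by
    refine hBt.trans ?_
    rw [div_le_iff₀ (by nlinarith)]
    nlinarith [sq_nonneg r, mul_pos hr0 hr0]
  have hrq : ‖qpar τ‖ = r := by rw [← hrdef]
  have hAn : ‖A‖ ≤ 1.04 * r := by
    have := norm_sub_norm_le A (qpar τ)
    have h2 : ‖A‖ ≤ ‖qpar τ‖ + ‖A - qpar τ‖ := by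
      calc ‖A‖ = ‖qpar τ + (A - qpar τ)‖ := by ring_nf
        _ ≤ ‖qpar τ‖ + ‖A - qpar τ‖ := norm_add_le _ _
    rw [hrq] at h2
    nlinarith
  have hBn : ‖B‖ ≤ 1.6 * r := by
    have h2 : ‖B‖ ≤ ‖qpar τ‖ + ‖B - qpar τ‖ := by
      calc ‖B‖ = ‖qpar τ + (B - qpar τ)‖ := by ring_nf
        _ ≤ ‖qpar τ‖ + ‖B - qpar τ‖ := norm_add_le _ _
    rw [hrq] at h2
    nlinarith
  -- algebraic identity
  have key : Δ' τ - qpar τ =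
      (720 * (A - qpar τ) + 1008 * (B - qpar τ)) / 1728
        + 100 * A ^ 2 + 8000 * A ^ 3 - 147 * B ^ 2 := by
    simp only [Δ', E4, E6, ← hAdef, ← hBdef]
    ring
  -- norm bound
  have hnorm : ‖Δ' τ - qpar τ‖ ≤
      (720 * ‖A - qpar τ‖ + 1008 * ‖B - qpar τ‖) / 1728
        + 100 * ‖A‖ ^ 2 + 8000 * ‖A‖ ^ 3 + 147 * ‖B‖ ^ 2 := by
    rw [key]
    have t1 : ‖(720 * (A - qpar τ) + 1008 * (B - qpar τ)) / 1728‖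
        ≤ (720 * ‖A - qpar τ‖ + 1008 * ‖B - qpar τ‖) / 1728 := by
      rw [norm_div]
      have h1728 : ‖(1728 : ℂ)‖ = 1728 := by
        simp
      rw [h1728]
      gcongr
      calc ‖720 * (A - qpar τ) + 1008 * (B - qpar τ)‖
          ≤ ‖720 * (A - qpar τ)‖ + ‖1008 * (B - qpar τ)‖ := norm_add_le _ _
        _ = 720 * ‖A - qpar τ‖ + 1008 * ‖B - qpar τ‖ := by
            rw [norm_mul, norm_mul]
            norm_num
    have t2 : ‖100 * A ^ 2‖ = 100 * ‖A‖ ^ 2 := by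
      rw [norm_mul, norm_pow]; norm_num
    have t3 : ‖8000 * A ^ 3‖ = 8000 * ‖A‖ ^ 3 := by
      rw [norm_mul, norm_pow]; norm_num
    have t4 : ‖147 * B ^ 2‖ = 147 * ‖B‖ ^ 2 := by
      rw [norm_mul, norm_pow]; norm_num
    calc ‖(720 * (A - qpar τ) + 1008 * (B - qpar τ)) / 1728
          + 100 * A ^ 2 + 8000 * A ^ 3 - 147 * B ^ 2‖
        ≤ ‖(720 * (A - qpar τ) + 1008 * (B - qpar τ)) / 1728
          + 100 * A ^ 2 + 8000 * A ^ 3‖ + ‖147 * B ^ 2‖ := norm_sub_le _ _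
      _ ≤ ‖(720 * (A - qpar τ) + 1008 * (B - qpar τ)) / 1728 + 100 * A ^ 2‖
          + ‖8000 * A ^ 3‖ + ‖147 * B ^ 2‖ := by
          have := norm_add_le ((720 * (A - qpar τ) + 1008 * (B - qpar τ)) / 1728
            + 100 * A ^ 2) (8000 * A ^ 3)
          linarith
      _ ≤ ‖(720 * (A - qpar τ) + 1008 * (B - qpar τ)) / 1728‖ + ‖100 * A ^ 2‖
          + ‖8000 * A ^ 3‖ + ‖147 * B ^ 2‖ := by
          have := norm_add_le ((720 * (A - qpar τ) + 1008 * (B - qpar τ)) / 1728)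
            (100 * A ^ 2)
          linarith
      _ ≤ _ := by rw [t2, t3, t4]; linarith
  -- final numeric computation
  have hA2' : ‖A‖ ^ 2 ≤ 1.0816 * r ^ 2 := by
    calc ‖A‖ ^ 2 ≤ (1.04 * r) ^ 2 := pow_le_pow_left₀ (norm_nonneg A) hAn 2
      _ = 1.0816 * r ^ 2 := by ring
  have hA3' : ‖A‖ ^ 3 ≤ 1.124864 * r ^ 3 := by
    calc ‖A‖ ^ 3 ≤ (1.04 * r) ^ 3 := pow_le_pow_left₀ (norm_nonneg A) hAn 3
      _ = 1.124864 * r ^ 3 := by ring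
  have hB2' : ‖B‖ ^ 2 ≤ 2.56 * r ^ 2 := by
    calc ‖B‖ ^ 2 ≤ (1.6 * r) ^ 2 := pow_le_pow_left₀ (norm_nonneg B) hBn 2
      _ = 2.56 * r ^ 2 := by ring
  have hr3 : r ^ 3 ≤ (1 / 8000) * r ^ 2 := by nlinarith [sq_nonneg r]
  have hr2 : (0:ℝ) < r ^ 2 := by positivity
  have hfin : ‖Δ' τ - qpar τ‖ < 3700 * r ^ 2 := by
    calc ‖Δ' τ - qpar τ‖ ≤ (720 * ‖A - qpar τ‖ + 1008 * ‖B - qpar τ‖) / 1728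
          + 100 * ‖A‖ ^ 2 + 8000 * ‖A‖ ^ 3 + 147 * ‖B‖ ^ 2 := hnorm
      _ < 3700 * r ^ 2 := by linarith
  rw [norm_div, norm_pow]
  rw [div_lt_iff₀ (pow_pos (norm_pos_iff.mpr hq0) 2)]
  calc ‖Δ' τ - qpar τ‖ = ‖Δ' τ - qpar τ‖ := rfl
    _ < 3700 * r ^ 2 := hfin
    _ = 3700 * ‖qpar τ‖ ^ 2 := by rw [← hrdef]
end
end
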